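/- arXiv:1701.01970 — 6 statements merged into one kernel-verified Lean document; each statement's English description precedes it below -/
import Mathlib

section
/- Fix z = (z1,z2) ∈ [0,1)^2 and let f(t1,t2) = 1 if z1 < t1 and z2 < t2, and f(t1,t2) = 0 otherwise. Let j1, j2 ∈ ℕ₀ and m1 ∈ {0,…,2^{j1}−1}, m2 ∈ {0,…,2^{j2}−1}. If z lies in the interior of I_{j1,m1} × I_{j2,m2}, then μ_{(j1,j2),(m1,m2)}(f) = 2^{−(j1+j2+2)}·(1 − |2m1 + 1 − 2^{j1+1}z1|)·(1 − |2m2 + 1 − 2^{j2+1}z2|). -/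
open MeasureTheory Set

/-- The L∞-normalized Haar function `h_{j,m}` on `[0,1)`: it is `+1` on the left half
`[2m/2^{j+1}, (2m+1)/2^{j+1})` of the dyadic interval `I_{j,m}`, `-1` on the right half
`[(2m+1)/2^{j+1}, (2m+2)/2^{j+1})`, and `0` elsewhere. -/
noncomputable def haar (j m : ℕ) (t : ℝ) : ℝ :=
  if (2 * m : ℝ) / 2 ^ (j + 1) ≤ t ∧ t < (2 * m + 1 : ℝ) / 2 ^ (j + 1) then 1
  else if (2 * m + 1 : ℝ) / 2 ^ (j + 1) ≤ t ∧ t < (2 * m + 2 : ℝ) / 2 ^ (j + 1) then -1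
  else 0

/-- First coordinate of a point of the Hammersley type point set:
`t_n/2 + t_{n-1}/2^2 + ⋯ + t_1/2^n`, where the index `i : Fin n` corresponds to `t_{i+1}`,
so the digit `t i` gets divided by `2^{n - i}`. -/
noncomputable def hamX (n : ℕ) (t : Fin n → Bool) : ℝ :=
  ∑ i : Fin n, (if t i then (1 : ℝ) else 0) / 2 ^ (n - i.val)

/-- Second coordinate of a point of the Hammersley type point set:
`s_1/2 + s_2/2^2 + ⋯ + s_n/2^n` with `s_i = t_i` if `σ i = false` and `s_i = 1 - t_i`
if `σ i = true`, i.e. `s_i = t_i XOR σ i`. -/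
noncomputable def hamY (n : ℕ) (σ : Fin n → Bool) (t : Fin n → Bool) : ℝ :=
  ∑ i : Fin n, (if (t i).xor (σ i) then (1 : ℝ) else 0) / 2 ^ (i.val + 1)

/-- The points of the symmetrized Hammersley type multiset `R̃_n`, parametrized by a digit
vector `t` and two reflection bits: `(x,y)`, `(x,1-y)`, `(1-x,y)`, `(1-x,1-y)`. -/
noncomputable def symPoint (n : ℕ) (σ : Fin n → Bool) (z : (Fin n → Bool) × Bool × Bool) :
    ℝ × ℝ :=
  (if z.2.1 then 1 - hamX n z.1 else hamX n z.1,
   if z.2.2 then 1 - hamY n σ z.1 else hamY n σ z.1)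

/-- The local discrepancy function of the symmetrized Hammersley type multiset `R̃_n`
with `N = 2^{n+2}` points counted with multiplicity. -/
noncomputable def discSym (n : ℕ) (σ : Fin n → Bool) (t1 t2 : ℝ) : ℝ :=
  (∑ z : (Fin n → Bool) × Bool × Bool,
      if (symPoint n σ z).1 < t1 ∧ (symPoint n σ z).2 < t2 then (1 : ℝ) else 0) / 2 ^ (n + 2)
    - t1 * t2

lemma haar_left {j m : ℕ} {t : ℝ} (h1 : (2 * m : ℝ) / 2 ^ (j + 1) ≤ t)
    (h2 : t < (2 * m + 1 : ℝ) / 2 ^ (j + 1)) : haar j m t = 1 := by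
  unfold haar; rw [if_pos ⟨h1, h2⟩]

lemma haar_right {j m : ℕ} {t : ℝ} (h1 : (2 * m + 1 : ℝ) / 2 ^ (j + 1) ≤ t)
    (h2 : t < (2 * m + 2 : ℝ) / 2 ^ (j + 1)) : haar j m t = -1 := by
  unfold haar
  rw [if_neg, if_pos ⟨h1, h2⟩]
  rintro ⟨-, hb⟩; exact absurd h1 (not_le.2 hb)

lemma haar_zero_right {j m : ℕ} {t : ℝ} (h : (2 * m + 2 : ℝ) / 2 ^ (j + 1) ≤ t) :
    haar j m t = 0 := by
  have hp : (0:ℝ) < 2 ^ (j + 1) := by positivity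
  have l1 : (2 * m + 1 : ℝ) / 2 ^ (j + 1) < (2 * m + 2 : ℝ) / 2 ^ (j + 1) := by
    gcongr <;> norm_num
  have l2 : (2 * m : ℝ) / 2 ^ (j + 1) < (2 * m + 1 : ℝ) / 2 ^ (j + 1) := by
    gcongr <;> norm_num
  unfold haar
  rw [if_neg, if_neg]
  · rintro ⟨-, h2⟩; linarith
  · rintro ⟨-, h2⟩; linarith

lemma oneD (j m : ℕ) (hm : m < 2 ^ j) (z : ℝ)
    (hz : z ∈ Set.Ioo ((m : ℝ) / 2 ^ j) ((m + 1) / 2 ^ j)) :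
    (∫ t in Set.Ico (0 : ℝ) 1, (if z < t then (1:ℝ) else 0) * haar j m t)
      = -(1 / 2 ^ (j + 1)) * (1 - |2 * (m : ℝ) + 1 - 2 ^ (j + 1) * z|) := by
  have hp : (0:ℝ) < 2 ^ (j + 1) := by positivity
  have hpj : (0:ℝ) < 2 ^ j := by positivity
  set a : ℝ := (2 * m : ℝ) / 2 ^ (j + 1) with ha
  set c : ℝ := (2 * m + 1 : ℝ) / 2 ^ (j + 1) with hc
  set b : ℝ := (2 * m + 2 : ℝ) / 2 ^ (j + 1) with hb
  have hac : a < c := by rw [ha, hc]; gcongr <;> norm_num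
  have hcb : c < b := by rw [hc, hb]; gcongr <;> norm_num
  have hm' : (m : ℝ) + 1 ≤ 2 ^ j := by exact_mod_cast hm
  have haz : a < z := by
    have : (m : ℝ) / 2 ^ j = a := by rw [ha, pow_succ]; field_simp
    rw [← this]; exact hz.1
  have hzb : z < b := by
    have : ((m : ℝ) + 1) / 2 ^ j = b := by rw [hb, pow_succ]; field_simp
    rw [← this]; exact hz.2
  have h0a : 0 ≤ a := by positivity
  have hb1 : b ≤ 1 := by
    rw [hb, div_le_one hp, pow_succ]; push_cast; linarith
  have h0z : 0 ≤ z := le_of_lt (lt_of_le_of_lt h0a haz)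
  have hcval : c * 2 ^ (j + 1) = 2 * m + 1 := by rw [hc]; field_simp
  have hbval : b * 2 ^ (j + 1) = 2 * m + 2 := by rw [hb]; field_simp
  rcases lt_or_ge z c with hzc | hcz
  · -- z in left half
    have hFeq : ∀ t : ℝ, (if z < t then (1:ℝ) else 0) * haar j m t
        = Set.indicator (Set.Ioo z c) (fun _ => (1:ℝ)) t
          + Set.indicator (Set.Ico c b) (fun _ => (-1:ℝ)) t := by
      intro t
      rcases le_or_gt t z with h | h
      · rw [if_neg (not_lt.2 h), zero_mul,
          Set.indicator_of_notMem (fun hh : t ∈ Set.Ioo z c => absurd hh.1 (not_lt.2 h)),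
          Set.indicator_of_notMem (fun hh : t ∈ Set.Ico c b => by
            have := hh.1; linarith)]
        norm_num
      · rw [if_pos h, one_mul]
        rcases lt_or_ge t c with h2 | h2
        · rw [haar_left (le_of_lt (lt_trans haz h)) h2,
            Set.indicator_of_mem (Set.mem_Ioo.mpr ⟨h, h2⟩),
            Set.indicator_of_notMem (fun hh : t ∈ Set.Ico c b => absurd hh.1 (not_le.2 h2))]
          norm_num
        · rcases lt_or_ge t b with h3 | h3
          · rw [haar_right h2 h3,
              Set.indicator_of_notMem (fun hh : t ∈ Set.Ioo z c => absurd hh.2 (not_lt.2 h2)),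
              Set.indicator_of_mem (Set.mem_Ico.mpr ⟨h2, h3⟩)]
            norm_num
          · rw [haar_zero_right h3,
              Set.indicator_of_notMem (fun hh : t ∈ Set.Ioo z c => absurd hh.2 (not_lt.2 h2)),
              Set.indicator_of_notMem (fun hh : t ∈ Set.Ico c b => absurd hh.2 (not_lt.2 h3))]
            norm_num
    simp only [hFeq]
    have int1 : IntegrableOn ((Set.Ioo z c).indicator fun _ => (1:ℝ)) (Set.Ico (0:ℝ) 1) :=
      Integrable.indicator (integrableOn_const measure_Ico_lt_top.ne)
        measurableSet_Ioo
    have int2 : IntegrableOn ((Set.Ico c b).indicator fun _ => (-1:ℝ)) (Set.Ico (0:ℝ) 1) :=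
      Integrable.indicator (integrableOn_const measure_Ico_lt_top.ne)
        measurableSet_Ico
    rw [integral_add int1 int2, setIntegral_indicator measurableSet_Ioo,
      setIntegral_indicator measurableSet_Ico,
      show Set.Ico (0:ℝ) 1 ∩ Set.Ioo z c = Set.Ioo z c from
        Set.inter_eq_right.mpr (fun t ht => ⟨by linarith [ht.1], by linarith [ht.2]⟩),
      show Set.Ico (0:ℝ) 1 ∩ Set.Ico c b = Set.Ico c b from
        Set.inter_eq_right.mpr (fun t ht => ⟨by linarith [ht.1], by linarith [ht.2]⟩),
      setIntegral_const, setIntegral_const, Real.volume_real_Ioo_of_le (by linarith),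
      Real.volume_real_Ico_of_le (by linarith)]
    have habs : |2 * (m : ℝ) + 1 - 2 ^ (j + 1) * z| = 2 * (m : ℝ) + 1 - 2 ^ (j + 1) * z := by
      apply abs_of_nonneg
      have := (lt_div_iff₀ hp).mp hzc
      rw [hc] at hzc
      nlinarith [(lt_div_iff₀ hp).mp hzc]
    rw [habs]
    simp only [smul_eq_mul]
    rw [hc, hb]; field_simp; ring
  · -- z in right half
    have hFeq : ∀ t : ℝ, (if z < t then (1:ℝ) else 0) * haar j m t
        = Set.indicator (Set.Ioo z b) (fun _ => (-1:ℝ)) t := by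
      intro t
      rcases le_or_gt t z with h | h
      · rw [if_neg (not_lt.2 h), zero_mul,
          Set.indicator_of_notMem (fun hh : t ∈ Set.Ioo z b => absurd hh.1 (not_lt.2 h))]
      · rw [if_pos h, one_mul]
        rcases lt_or_ge t b with h3 | h3
        · rw [haar_right (by linarith) h3, Set.indicator_of_mem (Set.mem_Ioo.mpr ⟨h, h3⟩)]
        · rw [haar_zero_right h3,
            Set.indicator_of_notMem (fun hh : t ∈ Set.Ioo z b => absurd hh.2 (not_lt.2 h3))]
    simp only [hFeq]
    rw [setIntegral_indicator measurableSet_Ioo,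
      show Set.Ico (0:ℝ) 1 ∩ Set.Ioo z b = Set.Ioo z b from
        Set.inter_eq_right.mpr (fun t ht => ⟨by linarith [ht.1], by linarith [ht.2]⟩),
      setIntegral_const, Real.volume_real_Ioo_of_le (by linarith)]
    have habs : |2 * (m : ℝ) + 1 - 2 ^ (j + 1) * z| = -(2 * (m : ℝ) + 1 - 2 ^ (j + 1) * z) := by
      apply abs_of_nonpos
      nlinarith [(div_le_iff₀ hp).mp hcz]
    rw [habs]
    simp only [smul_eq_mul]
    rw [hb]; field_simp; ring

/-- Lemma 3.3(i): for `f(t) = 1_{[0,t₁)×[0,t₂)}(z)` with `z` in the interior of the dyadic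
box `I_{(j₁,j₂),(m₁,m₂)}` with `j₁, j₂ ∈ ℕ₀`, the Haar coefficient equals
`2^{-(j₁+j₂+2)}(1 - |2m₁+1-2^{j₁+1}z₁|)(1 - |2m₂+1-2^{j₂+1}z₂|)`. -/
theorem counting_haar_coeff (z1 z2 : ℝ)
    (hz1' : z1 ∈ Set.Ico (0 : ℝ) 1) (hz2' : z2 ∈ Set.Ico (0 : ℝ) 1)
    (j1 j2 m1 m2 : ℕ) (h1 : m1 < 2 ^ j1) (h2 : m2 < 2 ^ j2)
    (hz1 : z1 ∈ Set.Ioo ((m1 : ℝ) / 2 ^ j1) ((m1 + 1) / 2 ^ j1))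
    (hz2 : z2 ∈ Set.Ioo ((m2 : ℝ) / 2 ^ j2) ((m2 + 1) / 2 ^ j2)) :
    (∫ t1 in Set.Ico (0 : ℝ) 1, ∫ t2 in Set.Ico (0 : ℝ) 1,
      (if z1 < t1 ∧ z2 < t2 then (1 : ℝ) else 0) * haar j1 m1 t1 * haar j2 m2 t2)
    = 1 / 2 ^ (j1 + j2 + 2) * (1 - |2 * (m1 : ℝ) + 1 - 2 ^ (j1 + 1) * z1|)
        * (1 - |2 * (m2 : ℝ) + 1 - 2 ^ (j2 + 1) * z2|) := by
  have key : ∀ t1 t2 : ℝ,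
      (if z1 < t1 ∧ z2 < t2 then (1 : ℝ) else 0) * haar j1 m1 t1 * haar j2 m2 t2
      = ((if z1 < t1 then (1:ℝ) else 0) * haar j1 m1 t1)
        * ((if z2 < t2 then (1:ℝ) else 0) * haar j2 m2 t2) := by
    intro t1 t2
    by_cases ha : z1 < t1 <;> by_cases hb : z2 < t2 <;>
      simp [ha, hb] <;> ring
  simp only [key]
  have inner : ∀ t1 : ℝ,
      (∫ t2 in Set.Ico (0 : ℝ) 1,
        ((if z1 < t1 then (1:ℝ) else 0) * haar j1 m1 t1)
          * ((if z2 < t2 then (1:ℝ) else 0) * haar j2 m2 t2))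
      = ((if z1 < t1 then (1:ℝ) else 0) * haar j1 m1 t1)
        * (-(1 / 2 ^ (j2 + 1)) * (1 - |2 * (m2 : ℝ) + 1 - 2 ^ (j2 + 1) * z2|)) := by
    intro t1
    rw [MeasureTheory.integral_const_mul, oneD j2 m2 h2 z2 hz2]
  simp only [inner]
  rw [integral_mul_const, oneD j1 m1 h1 z1 hz1]
  have hpow : (2:ℝ) ^ (j1 + j2 + 2) = 2 ^ (j1 + 1) * 2 ^ (j2 + 1) := by
    rw [show j1 + j2 + 2 = (j1 + 1) + (j2 + 1) by ring, pow_add]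
  rw [hpow]
  have p1 : (0:ℝ) < 2 ^ (j1+1) := by positivity
  have p2 : (0:ℝ) < 2 ^ (j2+1) := by positivity
  field_simp
end

section
/- Fix z = (z1,z2) ∈ [0,1)^2 and let f(t1,t2) = 1 if z1 < t1 and z2 < t2, and f(t1,t2) = 0 otherwise. Let k ∈ ℕ₀ and m ∈ {0,…,2^k−1}. If z1 ∈ (0,1) and z2 lies in the interior of I_{k,m}, then μ_{(−1,k),(0,m)}(f) = ∫_{[0,1)^2} f(t)·h_{k,m}(t2) dt = −2^{−(k+1)}·(1 − z1)·(1 − |2m + 1 − 2^{k+1}z2|). Likewise, if z2 ∈ (0,1) and z1 lies in the interior of I_{k,m}, then μ_{(k,−1),(m,0)}(f) = ∫_{[0,1)^2} f(t)·h_{k,m}(t1) dt = −2^{−(k+1)}·(1 − z2)·(1 − |2m + 1 − 2^{k+1}z1|). -/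
open MeasureTheory Set

lemma haar_eq_indicator (k m : ℕ) (t : ℝ) :
    haar k m t =
      (Ico ((2*m:ℝ)/2^(k+1)) ((2*m+1:ℝ)/2^(k+1))).indicator (fun _ => (1:ℝ)) t
      - (Ico ((2*m+1:ℝ)/2^(k+1)) ((2*m+2:ℝ)/2^(k+1))).indicator (fun _ => (1:ℝ)) t := by
  unfold haar
  by_cases h1 : (2*(m:ℝ))/2^(k+1) ≤ t ∧ t < (2*m+1:ℝ)/2^(k+1)
  · have h2 : ¬((2*(m:ℝ)+1)/2^(k+1) ≤ t ∧ t < (2*m+2:ℝ)/2^(k+1)) := by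
      rintro ⟨h, _⟩; linarith [h1.2]
    simp [Set.indicator_apply, mem_Ico, h1, h2]
  · by_cases h2 : (2*(m:ℝ)+1)/2^(k+1) ≤ t ∧ t < (2*m+2:ℝ)/2^(k+1)
    · simp [Set.indicator_apply, mem_Ico, h1, h2]
    · simp [Set.indicator_apply, mem_Ico, h1, h2]

lemma ind_integrable (a b : ℝ) :
    Integrable ((Ico a b).indicator (fun _ => (1:ℝ))) := by
  rw [integrable_indicator_iff measurableSet_Ico]
  exact integrableOn_const measure_Ico_lt_top.ne

lemma lemA (z : ℝ) (h0 : 0 ≤ z) (h1 : z < 1) :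
    ∫ t in Ico (0:ℝ) 1, (if z < t then (1:ℝ) else 0) = 1 - z := by
  have : ∀ t : ℝ, (if z < t then (1:ℝ) else 0) = (Ioi z).indicator (fun _ => (1:ℝ)) t := by
    intro t; by_cases h : z < t <;> simp [Set.indicator_apply, h]
  simp_rw [this]
  rw [setIntegral_indicator measurableSet_Ioi]
  have hs : Ico (0:ℝ) 1 ∩ Ioi z = Ioo z 1 := by
    ext t; simp only [mem_inter_iff, mem_Ico, mem_Ioi, mem_Ioo]
    constructor
    · rintro ⟨⟨_, h⟩, h'⟩; exact ⟨h', h⟩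
    · rintro ⟨h, h'⟩; exact ⟨⟨by linarith, h'⟩, h⟩
  rw [hs, setIntegral_const, measureReal_def, Real.volume_Ioo, ENNReal.toReal_ofReal (by linarith)]
  simp

lemma lemB (k m : ℕ) (hm : m < 2 ^ k) (z : ℝ)
    (hz : z ∈ Ioo ((m : ℝ) / 2 ^ k) ((m + 1) / 2 ^ k)) :
    ∫ t in Ico (0:ℝ) 1, (if z < t then (1:ℝ) else 0) * haar k m t
      = -(1 / 2 ^ (k + 1)) * (1 - |2 * (m : ℝ) + 1 - 2 ^ (k + 1) * z|) := by
  set P : ℝ := 2 ^ (k + 1) with hP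
  have hPpos : (0:ℝ) < P := by positivity
  have ha : (m : ℝ) / 2 ^ k = 2 * m / P := by
    rw [hP, pow_succ]; ring
  have hb : ((m : ℝ) + 1) / 2 ^ k = (2 * m + 2) / P := by
    rw [hP, pow_succ]; ring
  have hza : 2 * (m:ℝ) / P < z := by rw [← ha]; exact hz.1
  have hzb : z < (2 * (m:ℝ) + 2) / P := by rw [← hb]; exact hz.2
  have hmk : (m : ℝ) + 1 ≤ 2 ^ k := by exact_mod_cast hm
  have hb1 : (2 * (m:ℝ) + 2) / P ≤ 1 := by
    rw [div_le_one hPpos, hP, pow_succ]; nlinarith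
  have hz0 : 0 ≤ z := le_trans (by positivity) hza.le
  have hz1 : z < 1 := lt_of_lt_of_le hzb hb1
  have hif : ∀ t : ℝ, (if z < t then (1:ℝ) else 0) * haar k m t
      = (Ioi z).indicator (haar k m) t := by
    intro t; by_cases h : z < t <;> simp [Set.indicator_apply, h]
  simp_rw [hif]
  rw [setIntegral_indicator measurableSet_Ioi]
  have hs : Ico (0:ℝ) 1 ∩ Ioi z = Ioo z 1 := by
    ext t; simp only [mem_inter_iff, mem_Ico, mem_Ioi, mem_Ioo]
    constructor
    · rintro ⟨⟨_, h⟩, h'⟩; exact ⟨h', h⟩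
    · rintro ⟨h, h'⟩; exact ⟨⟨by linarith, h'⟩, h⟩
  rw [hs]
  have heq : ∀ t ∈ Ioo z 1, haar k m t =
      (Ico ((2*m:ℝ)/P) ((2*m+1:ℝ)/P)).indicator (fun _ => (1:ℝ)) t
      - (Ico ((2*m+1:ℝ)/P) ((2*m+2:ℝ)/P)).indicator (fun _ => (1:ℝ)) t := by
    intro t _; exact haar_eq_indicator k m t
  rw [setIntegral_congr_fun measurableSet_Ioo heq]
  rw [integral_sub ((ind_integrable _ _).integrableOn) ((ind_integrable _ _).integrableOn)]
  rw [setIntegral_indicator measurableSet_Ico, setIntegral_indicator measurableSet_Ico,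
    setIntegral_const, setIntegral_const]
  simp only [smul_eq_mul, mul_one]
  have hc : (2*(m:ℝ)+1)/P = 2*(m:ℝ)/P + 1/P := by ring
  by_cases hcase : z < (2*(m:ℝ)+1)/P
  · have hs1 : Ioo z 1 ∩ Ico ((2*m:ℝ)/P) ((2*m+1:ℝ)/P) = Ioo z ((2*m+1:ℝ)/P) := by
      ext t; simp only [mem_inter_iff, mem_Ioo, mem_Ico]
      constructor
      · rintro ⟨⟨h1, _⟩, ⟨_, h4⟩⟩; exact ⟨h1, h4⟩
      · rintro ⟨h1, h2⟩
        refine ⟨⟨h1, ?_⟩, ⟨by linarith, h2⟩⟩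
        have : (2*(m:ℝ)+1)/P ≤ 1 := by
          apply le_trans _ hb1; apply div_le_div_of_nonneg_right _ hPpos.le <;> linarith
        linarith
    have hs2 : Ioo z 1 ∩ Ico ((2*m+1:ℝ)/P) ((2*m+2:ℝ)/P)
        = Ico ((2*m+1:ℝ)/P) ((2*m+2:ℝ)/P) := by
      ext t; simp only [mem_inter_iff, mem_Ioo, mem_Ico]
      constructor
      · rintro ⟨_, h⟩; exact h
      · rintro ⟨h1, h2⟩
        exact ⟨⟨by linarith, by linarith⟩, h1, h2⟩
    rw [hs1, hs2, measureReal_def, measureReal_def, Real.volume_Ioo, Real.volume_Ico,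
      ENNReal.toReal_ofReal (by linarith), ENNReal.toReal_ofReal (by
        apply sub_nonneg.2; apply div_le_div_of_nonneg_right _ hPpos.le; linarith)]
    have habs : |2 * (m : ℝ) + 1 - P * z| = 2 * (m:ℝ) + 1 - P * z := by
      apply abs_of_nonneg
      have := (lt_div_iff₀ hPpos).1 hcase
      nlinarith
    rw [habs]
    field_simp
    ring
  · push_neg at hcase
    have hs1 : Ioo z 1 ∩ Ico ((2*m:ℝ)/P) ((2*m+1:ℝ)/P) = ∅ := by
      ext t; simp only [mem_inter_iff, mem_Ioo, mem_Ico, mem_empty_iff_false, iff_false]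
      rintro ⟨⟨h1, _⟩, ⟨_, h4⟩⟩; linarith
    have hs2 : Ioo z 1 ∩ Ico ((2*m+1:ℝ)/P) ((2*m+2:ℝ)/P) = Ioo z ((2*m+2:ℝ)/P) := by
      ext t; simp only [mem_inter_iff, mem_Ioo, mem_Ico]
      constructor
      · rintro ⟨⟨h1, _⟩, ⟨_, h4⟩⟩; exact ⟨h1, h4⟩
      · rintro ⟨h1, h2⟩
        exact ⟨⟨h1, by linarith⟩, by linarith, h2⟩
    rw [hs1, hs2, measureReal_def, measureReal_def, Real.volume_Ioo]
    simp only [measure_empty, ENNReal.toReal_zero]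
    rw [ENNReal.toReal_ofReal (by linarith)]
    have habs : |2 * (m : ℝ) + 1 - P * z| = -(2 * (m:ℝ) + 1 - P * z) := by
      apply abs_of_nonpos
      have := (div_le_iff₀ hPpos).1 hcase
      nlinarith
    rw [habs]
    field_simp
    ring

/-- Lemma 3.3(ii)&(iii): for `f(t) = 1_{[0,t₁)×[0,t₂)}(z)` and `j = (-1,k)` resp.
`j = (k,-1)` with `k ∈ ℕ₀`, if `z` lies in the interior of the corresponding dyadic box
then `μ_{(-1,k),(0,m)}(f) = -2^{-(k+1)}(1-z₁)(1-|2m+1-2^{k+1}z₂|)` and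
`μ_{(k,-1),(m,0)}(f) = -2^{-(k+1)}(1-z₂)(1-|2m+1-2^{k+1}z₁|)`. -/
theorem counting_haar_coeff_neg (z1 z2 : ℝ)
    (hz1 : z1 ∈ Set.Ico (0 : ℝ) 1) (hz2 : z2 ∈ Set.Ico (0 : ℝ) 1)
    (k m : ℕ) (hm : m < 2 ^ k) :
    (z1 ∈ Set.Ioo (0 : ℝ) 1 → z2 ∈ Set.Ioo ((m : ℝ) / 2 ^ k) ((m + 1) / 2 ^ k) →
      (∫ t1 in Set.Ico (0 : ℝ) 1, ∫ t2 in Set.Ico (0 : ℝ) 1,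
        (if z1 < t1 ∧ z2 < t2 then (1 : ℝ) else 0) * haar k m t2)
      = -(1 / 2 ^ (k + 1)) * (1 - z1) * (1 - |2 * (m : ℝ) + 1 - 2 ^ (k + 1) * z2|)) ∧
    (z2 ∈ Set.Ioo (0 : ℝ) 1 → z1 ∈ Set.Ioo ((m : ℝ) / 2 ^ k) ((m + 1) / 2 ^ k) →
      (∫ t1 in Set.Ico (0 : ℝ) 1, ∫ t2 in Set.Ico (0 : ℝ) 1,
        (if z1 < t1 ∧ z2 < t2 then (1 : ℝ) else 0) * haar k m t1)
      = -(1 / 2 ^ (k + 1)) * (1 - z2) * (1 - |2 * (m : ℝ) + 1 - 2 ^ (k + 1) * z1|)) := by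
  constructor
  · intro hz1' hz2'
    have C := lemB k m hm z2 hz2'
    have inner : ∀ t1 : ℝ, (∫ t2 in Set.Ico (0:ℝ) 1,
        (if z1 < t1 ∧ z2 < t2 then (1:ℝ) else 0) * haar k m t2)
        = (if z1 < t1 then (1:ℝ) else 0) *
          (-(1 / 2 ^ (k + 1)) * (1 - |2 * (m : ℝ) + 1 - 2 ^ (k + 1) * z2|)) := by
      intro t1
      by_cases h : z1 < t1
      · rw [if_pos h, one_mul]
        simp only [h, true_and]
        exact C
      · simp [h]
    simp_rw [inner]
    rw [integral_mul_const, lemA z1 hz1.1 hz1.2]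
    ring
  · intro hz2' hz1'
    have C := lemB k m hm z1 hz1'
    have inner : ∀ t1 : ℝ, (∫ t2 in Set.Ico (0:ℝ) 1,
        (if z1 < t1 ∧ z2 < t2 then (1:ℝ) else 0) * haar k m t1)
        = ((if z1 < t1 then (1:ℝ) else 0) * haar k m t1) * (1 - z2) := by
      intro t1
      have hpt : ∀ t2 : ℝ, (if z1 < t1 ∧ z2 < t2 then (1:ℝ) else 0) * haar k m t1
          = ((if z1 < t1 then (1:ℝ) else 0) * haar k m t1) * (if z2 < t2 then (1:ℝ) else 0) := by
        intro t2
        by_cases h1 : z1 < t1 <;> by_cases h2 : z2 < t2 <;> simp [h1, h2]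
      simp_rw [hpt]
      rw [integral_const_mul, lemA z2 hz2.1 hz2.2]
    simp_rw [inner]
    rw [integral_mul_const, C]
    ring
end

section
/- Let n ∈ ℕ, let R_n be a Hammersley type point set (for an arbitrary fixed choice function σ), and let \tilde{R}_n be the associated symmetrized multiset with N = 2^{n+2} points. Let k ∈ ℕ₀ with k < n and m ∈ {0,…,2^k−1}. Then the sum over \tilde{R}_n (with multiplicity) of (1 − |2m + 1 − 2^{k+1}z1|)·(1 − z2), extended over those points z = (z1,z2) of \tilde{R}_n whose first coordinate z1 lies in the interior of I_{k,m}, equals 2^{n−k}. -/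
open MeasureTheory Set

private lemma gauss_real (L : ℕ) : ∑ r ∈ Finset.range L, (r : ℝ) = L * ((L : ℝ) - 1) / 2 := by
  induction L with
  | zero => simp
  | succ n ih => rw [Finset.sum_range_succ, ih]; push_cast; ring

private lemma abs_sum_real (L : ℕ) (hL : 1 ≤ L) :
    ∑ r ∈ Finset.range (2 * L - 1), |(L : ℝ) - ((r : ℝ) + 1)| = L * ((L : ℝ) - 1) := by
  rw [Finset.range_eq_Ico,
    ← Finset.sum_Ico_consecutive _ (Nat.zero_le L) (by omega : L ≤ 2 * L - 1),
    ← Finset.range_eq_Ico]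
  have h1 : ∑ r ∈ Finset.range L, |(L : ℝ) - ((r : ℝ) + 1)| = L * ((L : ℝ) - 1) / 2 := by
    have hc : ∀ r ∈ Finset.range L, |(L : ℝ) - ((r : ℝ) + 1)| = ((L : ℝ) - 1) - r := by
      intro r hr
      rw [Finset.mem_range] at hr
      have hrL : (r : ℝ) + 1 ≤ L := by exact_mod_cast Nat.succ_le_of_lt hr
      rw [abs_of_nonneg (by linarith)]; ring
    rw [Finset.sum_congr rfl hc, Finset.sum_sub_distrib, Finset.sum_const,
      Finset.card_range, gauss_real, nsmul_eq_mul]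
    ring
  have h2 : ∑ r ∈ Finset.Ico L (2 * L - 1), |(L : ℝ) - ((r : ℝ) + 1)| = L * ((L : ℝ) - 1) / 2 := by
    rw [Finset.sum_Ico_eq_sum_range, (by omega : 2 * L - 1 - L = L - 1)]
    have hc : ∀ i ∈ Finset.range (L - 1), |(L : ℝ) - (((L + i : ℕ) : ℝ) + 1)| = (i : ℝ) + 1 := by
      intro i _
      push_cast
      rw [show (L : ℝ) - ((L : ℝ) + (i : ℝ) + 1) = -((i : ℝ) + 1) by ring, abs_neg,
        abs_of_nonneg (by positivity)]
    rw [Finset.sum_congr rfl hc, Finset.sum_add_distrib, gauss_real, Finset.sum_const,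
      Finset.card_range, nsmul_eq_mul, mul_one, Nat.cast_sub hL]
    push_cast
    ring
  rw [h1, h2]; ring

private lemma hat_sum (L : ℕ) (hL : 1 ≤ L) :
    ∑ r ∈ Finset.range (2 * L - 1), (1 - |1 - ((r : ℝ) + 1) / (L : ℝ)|) = (L : ℝ) := by
  have hL0 : (0 : ℝ) < L := by exact_mod_cast hL
  have hc : ∀ r ∈ Finset.range (2 * L - 1),
      (1 - |1 - ((r : ℝ) + 1) / (L : ℝ)|) = 1 - |(L : ℝ) - ((r : ℝ) + 1)| / L := by
    intro r _
    have h : 1 - ((r : ℝ) + 1) / L = ((L : ℝ) - ((r : ℝ) + 1)) / L := by field_simp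
    rw [h, abs_div, abs_of_pos hL0]
  rw [Finset.sum_congr rfl hc, Finset.sum_sub_distrib, ← Finset.sum_div, abs_sum_real L hL,
    Finset.sum_const, Finset.card_range, nsmul_eq_mul, mul_one,
    Nat.cast_sub (by omega : 1 ≤ 2 * L)]
  push_cast
  field_simp
  ring

private lemma sum_hamX (n : ℕ) (G : ℝ → ℝ) :
    ∑ t : Fin n → Bool, G (hamX n t) = ∑ j ∈ Finset.range (2 ^ n), G ((j : ℝ) / 2 ^ n) := by
  have key : ∀ t : Fin n → Bool, hamX n t =
      ((∑ i : Fin n, (if t i then 1 else 0) * 2 ^ (i : ℕ) : ℕ) : ℝ) / 2 ^ n := by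
    intro t
    unfold hamX
    push_cast
    rw [Finset.sum_div]
    refine Finset.sum_congr rfl fun i _ => ?_
    have h2 : ((2 : ℝ)) ^ (n - (i : ℕ)) * 2 ^ (i : ℕ) = 2 ^ n := by
      rw [← pow_add]; congr 1; omega
    have hne : ((2 : ℝ)) ^ (n - (i : ℕ)) ≠ 0 := by positivity
    have hne2 : ((2 : ℝ)) ^ (i : ℕ) ≠ 0 := by positivity
    field_simp
    rw [← h2]; ring
  simp only [key]
  rw [← Fin.sum_univ_eq_sum_range (fun j => G ((j : ℝ) / 2 ^ n)) (2 ^ n)]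
  apply Fintype.sum_equiv
    ((Equiv.arrowCongr (Equiv.refl (Fin n)) finTwoEquiv.symm).trans finFunctionFinEquiv)
  intro t
  have hv : (∑ i : Fin n, (if t i then 1 else 0) * 2 ^ (i : ℕ) : ℕ)
      = ((((Equiv.arrowCongr (Equiv.refl (Fin n)) finTwoEquiv.symm).trans
          finFunctionFinEquiv) t : Fin (2 ^ n)) : ℕ) := by
    rw [Equiv.trans_apply, finFunctionFinEquiv_apply]
    refine Finset.sum_congr rfl fun i _ => ?_
    congr 1
    cases h : t i <;> simp [h, finTwoEquiv, Equiv.arrowCongr]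
  simp only [hv]

/-- The local "strip" function. -/
private noncomputable def Fs (k m : ℕ) (u : ℝ) : ℝ :=
  if (m : ℝ) / 2 ^ k < u ∧ u < ((m : ℝ) + 1) / 2 ^ k
  then 1 - |2 * (m : ℝ) + 1 - 2 ^ (k + 1) * u| else 0

private lemma Fs_zero (k m : ℕ) : Fs k m 0 = 0 := by
  rw [Fs, if_neg]
  rintro ⟨h1, -⟩
  exact absurd h1 (not_lt.mpr (by positivity))

private lemma Fs_one (k m : ℕ) (hm : m < 2 ^ k) : Fs k m 1 = 0 := by
  rw [Fs, if_neg]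
  rintro ⟨-, h2⟩
  have hmk : (m : ℝ) + 1 ≤ 2 ^ k := by exact_mod_cast Nat.succ_le_of_lt hm
  rw [lt_div_iff₀ (by positivity)] at h2
  linarith

private lemma core_sum (k m p : ℕ) (hm : m < 2 ^ k) :
    ∑ j ∈ Finset.range (2 ^ (k + 1 + p)), Fs k m ((j : ℝ) / 2 ^ (k + 1 + p))
      = ((2 ^ p : ℕ) : ℝ) := by
  have hq : (0 : ℝ) < 2 ^ k := by positivity
  have hn : (0 : ℝ) < 2 ^ (k + 1 + p) := by positivity
  have epow : (2 : ℕ) ^ (k + 1 + p) = 2 ^ (p + 1) * 2 ^ k := by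
    rw [← pow_add]; congr 1; omega
  have hcond : ∀ j : ℕ, Fs k m ((j : ℝ) / 2 ^ (k + 1 + p)) =
      if m * 2 ^ (p + 1) < j ∧ j < m * 2 ^ (p + 1) + 2 ^ (p + 1)
      then 1 - |2 * (m : ℝ) + 1 - 2 ^ (k + 1) * ((j : ℝ) / 2 ^ (k + 1 + p))| else 0 := by
    intro j
    rw [Fs]
    refine if_congr ?_ rfl rfl
    constructor
    · rintro ⟨h1, h2⟩
      rw [div_lt_div_iff₀ hq hn] at h1
      rw [div_lt_div_iff₀ hn hq] at h2
      have h1' : m * 2 ^ (k + 1 + p) < j * 2 ^ k := by exact_mod_cast h1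
      have h2' : j * 2 ^ k < (m + 1) * 2 ^ (k + 1 + p) := by exact_mod_cast h2
      rw [epow, ← mul_assoc] at h1' h2'
      have h1'' := Nat.lt_of_mul_lt_mul_right h1'
      have h2'' := Nat.lt_of_mul_lt_mul_right h2'
      rw [add_mul, one_mul] at h2''
      exact ⟨h1'', h2''⟩
    · rintro ⟨h1, h2⟩
      constructor
      · rw [div_lt_div_iff₀ hq hn]
        have : m * 2 ^ (k + 1 + p) < j * 2 ^ k := by
          rw [epow, ← mul_assoc]
          exact (Nat.mul_lt_mul_right (Nat.pow_pos (n := k) (by norm_num : 0 < 2))).mpr h1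
        exact_mod_cast this
      · rw [div_lt_div_iff₀ hn hq]
        have : j * 2 ^ k < (m + 1) * 2 ^ (k + 1 + p) := by
          rw [epow, ← mul_assoc]
          refine (Nat.mul_lt_mul_right (Nat.pow_pos (n := k) (by norm_num : 0 < 2))).mpr ?_
          rw [add_mul, one_mul]
          exact h2
        exact_mod_cast this
  simp only [hcond]
  rw [← Finset.sum_filter]
  have hb : m * 2 ^ (p + 1) + 2 ^ (p + 1) ≤ 2 ^ (k + 1 + p) := by
    have h1 : (m + 1) * 2 ^ (p + 1) ≤ 2 ^ k * 2 ^ (p + 1) :=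
      Nat.mul_le_mul_right _ (Nat.succ_le_of_lt hm)
    rw [add_mul, one_mul] at h1
    calc m * 2 ^ (p + 1) + 2 ^ (p + 1) ≤ 2 ^ k * 2 ^ (p + 1) := h1
      _ = 2 ^ (k + 1 + p) := by rw [← pow_add]; congr 1; omega
  have hfil : (Finset.range (2 ^ (k + 1 + p))).filter
      (fun j => m * 2 ^ (p + 1) < j ∧ j < m * 2 ^ (p + 1) + 2 ^ (p + 1))
      = Finset.Ico (m * 2 ^ (p + 1) + 1) (m * 2 ^ (p + 1) + 2 ^ (p + 1)) := by
    ext j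
    simp only [Finset.mem_filter, Finset.mem_range, Finset.mem_Ico]
    revert hb
    generalize m * 2 ^ (p + 1) = a
    generalize 2 ^ (p + 1) = M
    generalize 2 ^ (k + 1 + p) = N
    intro hb
    omega
  rw [hfil, Finset.sum_Ico_eq_sum_range]
  have hlen : m * 2 ^ (p + 1) + 2 ^ (p + 1) - (m * 2 ^ (p + 1) + 1) = 2 * 2 ^ p - 1 := by
    have hM : (2 : ℕ) ^ (p + 1) = 2 * 2 ^ p := by rw [pow_succ]; ring
    rw [hM]
    generalize m * (2 * 2 ^ p) = a
    generalize 2 ^ p = L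
    omega
  rw [hlen]
  have hterm : ∀ r ∈ Finset.range (2 * 2 ^ p - 1),
      (1 - |2 * (m : ℝ) + 1
        - 2 ^ (k + 1) * (((m * 2 ^ (p + 1) + 1 + r : ℕ) : ℝ) / 2 ^ (k + 1 + p))|)
      = 1 - |1 - ((r : ℝ) + 1) / ((2 ^ p : ℕ) : ℝ)| := by
    intro r _
    have hp : ((2 : ℝ)) ^ p ≠ 0 := by positivity
    have hnn : ((2 : ℝ)) ^ (k + 1 + p) ≠ 0 := by positivity
    have harg : 2 * (m : ℝ) + 1
        - 2 ^ (k + 1) * (((m * 2 ^ (p + 1) + 1 + r : ℕ) : ℝ) / 2 ^ (k + 1 + p))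
        = 1 - ((r : ℝ) + 1) / ((2 ^ p : ℕ) : ℝ) := by
      push_cast
      field_simp
      ring
    rw [harg]
  rw [Finset.sum_congr rfl hterm, hat_sum (2 ^ p) (Nat.one_le_two_pow)]

/-- For the symmetrized Hammersley type multiset `R̃_n`, `k < n` and `m ∈ {0,…,2^k-1}`, the
sum (with multiplicity) over the points `z` of `R̃_n` with `z₁` in the interior of `I_{k,m}`
of `(1 - |2m+1-2^{k+1}z₁|)(1 - z₂)` equals `2^{n-k}`. -/
theorem symmetrized_strip_sum (n : ℕ) (σ : Fin n → Bool) (k m : ℕ)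
    (hk : k < n) (hm : m < 2 ^ k) :
    (∑ z : (Fin n → Bool) × Bool × Bool,
      if (m : ℝ) / 2 ^ k < (symPoint n σ z).1 ∧ (symPoint n σ z).1 < ((m : ℝ) + 1) / 2 ^ k
      then (1 - |2 * (m : ℝ) + 1 - 2 ^ (k + 1) * (symPoint n σ z).1|)
            * (1 - (symPoint n σ z).2) else 0)
      = 2 ^ (n - k) := by
  classical
  obtain ⟨p, rfl⟩ : ∃ p, n = k + 1 + p := ⟨n - (k + 1), by omega⟩
  rw [Fintype.sum_prod_type]
  have step1 : ∀ t : Fin (k + 1 + p) → Bool,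
      (∑ b : Bool × Bool,
        if (m : ℝ) / 2 ^ k < (symPoint (k + 1 + p) σ (t, b)).1 ∧
            (symPoint (k + 1 + p) σ (t, b)).1 < ((m : ℝ) + 1) / 2 ^ k
        then (1 - |2 * (m : ℝ) + 1 - 2 ^ (k + 1) * (symPoint (k + 1 + p) σ (t, b)).1|)
              * (1 - (symPoint (k + 1 + p) σ (t, b)).2) else 0)
      = Fs k m (hamX (k + 1 + p) t) + Fs k m (1 - hamX (k + 1 + p) t) := by
    intro t
    rw [Fintype.sum_prod_type, Fintype.sum_bool, Fintype.sum_bool, Fintype.sum_bool]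
    simp only [symPoint, Fs]
    by_cases h1 : (m : ℝ) / 2 ^ k < 1 - hamX (k + 1 + p) t ∧
        1 - hamX (k + 1 + p) t < ((m : ℝ) + 1) / 2 ^ k <;>
      by_cases h2 : (m : ℝ) / 2 ^ k < hamX (k + 1 + p) t ∧
          hamX (k + 1 + p) t < ((m : ℝ) + 1) / 2 ^ k <;>
      simp [h1, h2] <;> ring
  rw [Finset.sum_congr rfl fun t _ => step1 t, Finset.sum_add_distrib,
    sum_hamX (k + 1 + p) (fun u => Fs k m u),
    sum_hamX (k + 1 + p) (fun u => Fs k m (1 - u))]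
  have reflect : ∑ j ∈ Finset.range (2 ^ (k + 1 + p)), Fs k m (1 - (j : ℝ) / 2 ^ (k + 1 + p))
      = ∑ j ∈ Finset.range (2 ^ (k + 1 + p)), Fs k m ((j : ℝ) / 2 ^ (k + 1 + p)) := by
    set N := 2 ^ (k + 1 + p) with hN
    have e1 : ∀ j ∈ Finset.range N,
        Fs k m (1 - (j : ℝ) / 2 ^ (k + 1 + p)) = Fs k m (((N - j : ℕ) : ℝ) / 2 ^ (k + 1 + p)) := by
      intro j hj
      congr 1
      rw [Nat.cast_sub (le_of_lt (Finset.mem_range.mp hj))]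
      have hcast : ((N : ℕ) : ℝ) = 2 ^ (k + 1 + p) := by rw [hN]; push_cast; ring
      rw [hcast, sub_div, div_self (by positivity : ((2 : ℝ) ^ (k + 1 + p)) ≠ 0)]
    rw [Finset.sum_congr rfl e1, ← Finset.sum_range_reflect]
    have e2 : ∀ j ∈ Finset.range N,
        Fs k m (((N - (N - 1 - j) : ℕ) : ℝ) / 2 ^ (k + 1 + p))
          = Fs k m (((j + 1 : ℕ) : ℝ) / 2 ^ (k + 1 + p)) := by
      intro j hj
      rw [Finset.mem_range] at hj
      congr 3
      omega
    rw [Finset.sum_congr rfl e2]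
    have h0 : Fs k m (((0 : ℕ) : ℝ) / 2 ^ (k + 1 + p)) = 0 := by
      simpa using Fs_zero k m
    have hNval : Fs k m (((N : ℕ) : ℝ) / 2 ^ (k + 1 + p)) = 0 := by
      have hcast : ((N : ℕ) : ℝ) = 2 ^ (k + 1 + p) := by rw [hN]; push_cast; ring
      rw [hcast, div_self (by positivity : ((2 : ℝ) ^ (k + 1 + p)) ≠ 0)]
      exact Fs_one k m hm
    have hsucc' := Finset.sum_range_succ' (fun j => Fs k m ((j : ℝ) / 2 ^ (k + 1 + p))) N
    have hsucc := Finset.sum_range_succ (fun j => Fs k m ((j : ℝ) / 2 ^ (k + 1 + p))) N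
    push_cast at hsucc' h0 hNval ⊢
    rw [hsucc] at hsucc'
    push_cast at hsucc'
    linarith [hsucc']
  rw [reflect, core_sum k m p hm, ← two_mul]
  have : k + 1 + p - k = p + 1 := by omega
  rw [this, pow_succ]
  push_cast
  ring
end

section
/- Let n ∈ ℕ, let \tilde{R}_n be a symmetrized Hammersley type point set with N = 2^{n+2} points (for an arbitrary fixed choice function σ), and let D be its local discrepancy function. For all j1, j2 ∈ ℕ₀ with j1 + j2 ≥ n − 1, j1 ≤ n, j2 ≤ n, and all m1 ∈ {0,…,2^{j1}−1}, m2 ∈ {0,…,2^{j2}−1}, the Haar coefficient satisfies |μ_{(j1,j2),(m1,m2)}(D)| ≤ 2^{−(n+j1+j2)}. -/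
open MeasureTheory Set

namespace DiscAux

/-- binary digit sum -/
def ksum (n : ℕ) (b : ℕ → Bool) : ℕ := ∑ i ∈ Finset.range n, cond (b i) (2 ^ i) 0

lemma ksum_lt (n : ℕ) (b : ℕ → Bool) : ksum n b < 2 ^ n := by
  induction n with
  | zero => simp [ksum]
  | succ n ih =>
    have h : cond (b n) (2 ^ n) 0 ≤ 2 ^ n := by cases b n <;> simp
    have : ksum (n + 1) b = ksum n b + cond (b n) (2 ^ n) 0 := Finset.sum_range_succ _ _
    rw [this, pow_succ]
    omega

lemma ksum_inj (n : ℕ) (b c : ℕ → Bool) (h : ksum n b = ksum n c) :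
    ∀ i < n, b i = c i := by
  induction n with
  | zero => omega
  | succ n ih =>
    have hb := ksum_lt n b
    have hc := ksum_lt n c
    have e1 : ksum (n + 1) b = ksum n b + cond (b n) (2 ^ n) 0 := Finset.sum_range_succ _ _
    have e2 : ksum (n + 1) c = ksum n c + cond (c n) (2 ^ n) 0 := Finset.sum_range_succ _ _
    rw [e1, e2] at h
    have htop : b n = c n ∧ ksum n b = ksum n c := by
      cases hbn : b n <;> cases hcn : c n <;> simp [hbn, hcn] at h ⊢ <;> omega
    intro i hi
    rcases Nat.lt_succ_iff_lt_or_eq.mp hi with hi | hi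
    · exact ih htop.2 i hi
    · subst hi; exact htop.1

lemma ksum_add (d e : ℕ) (b : ℕ → Bool) :
    ksum (d + e) b = ksum d b + 2 ^ d * ksum e (fun q => b (d + q)) := by
  induction e with
  | zero => simp [ksum]
  | succ e ih =>
    have e1 : ksum (d + (e + 1)) b = ksum (d + e) b + cond (b (d + e)) (2 ^ (d + e)) 0 := by
      rw [show d + (e + 1) = (d + e) + 1 by omega]; exact Finset.sum_range_succ _ _
    have e2 : ksum (e + 1) (fun q => b (d + q))
        = ksum e (fun q => b (d + q)) + cond (b (d + e)) (2 ^ e) 0 := Finset.sum_range_succ _ _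
    rw [e1, e2, ih]
    cases b (d + e) <;> simp [pow_add] <;> ring

lemma ksum_div (n d : ℕ) (hd : d ≤ n) (b : ℕ → Bool) :
    ksum n b / 2 ^ d = ksum (n - d) (fun q => b (d + q)) := by
  have := ksum_add d (n - d) b
  rw [show d + (n - d) = n by omega] at this
  rw [this, Nat.add_mul_div_left _ _ (by positivity), Nat.div_eq_of_lt (ksum_lt d b)]
  omega

/-- digits of the x-coordinate -/
def bX (n : ℕ) (t : Fin n → Bool) : ℕ → Bool :=
  fun i => if h : i < n then t ⟨i, h⟩ else false

/-- digits of the y-coordinate, reversed -/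
def bY (n : ℕ) (σ t : Fin n → Bool) : ℕ → Bool :=
  fun q => if h : n - 1 - q < n then xor (t ⟨n - 1 - q, h⟩) (σ ⟨n - 1 - q, h⟩) else false

lemma count_le_two (n j1 j2 : ℕ) (σ : Fin n → Bool) (hn : n ≤ j1 + j2 + 1)
    (hj1 : j1 ≤ n) (hj2 : j2 ≤ n) (M1 M2 : ℕ) :
    (Finset.univ.filter (fun t : Fin n → Bool =>
      ksum n (bX n t) / 2 ^ (n - j1) = M1 ∧ ksum n (bY n σ t) / 2 ^ (n - j2) = M2)).card ≤ 2 := by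
  classical
  have hinj : Set.InjOn (fun t : Fin n → Bool => if h : j2 < n then t ⟨j2, h⟩ else false)
      (Finset.univ.filter (fun t : Fin n → Bool =>
        ksum n (bX n t) / 2 ^ (n - j1) = M1 ∧ ksum n (bY n σ t) / 2 ^ (n - j2) = M2)) := by
    intro t ht u hu hφ
    simp only [Finset.coe_filter, Set.mem_setOf_eq, Finset.mem_univ, true_and] at ht hu
    have hXd : ∀ q < j1, bX n t (n - j1 + q) = bX n u (n - j1 + q) := by
      have h1 := ksum_div n (n - j1) (by omega) (bX n t)
      have h2 := ksum_div n (n - j1) (by omega) (bX n u)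
      rw [show n - (n - j1) = j1 by omega] at h1 h2
      have : ksum j1 (fun q => bX n t (n - j1 + q)) = ksum j1 (fun q => bX n u (n - j1 + q)) := by
        rw [← h1, ← h2, ht.1, hu.1]
      exact ksum_inj _ _ _ this
    have hYd : ∀ q < j2, bY n σ t (n - j2 + q) = bY n σ u (n - j2 + q) := by
      have h1 := ksum_div n (n - j2) (by omega) (bY n σ t)
      have h2 := ksum_div n (n - j2) (by omega) (bY n σ u)
      rw [show n - (n - j2) = j2 by omega] at h1 h2
      have : ksum j2 (fun q => bY n σ t (n - j2 + q)) = ksum j2 (fun q => bY n σ u (n - j2 + q)) := by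
        rw [← h1, ← h2, ht.2, hu.2]
      exact ksum_inj _ _ _ this
    funext i
    by_cases hi2 : (i : ℕ) < j2
    · -- from Y digits
      have hq : j2 - 1 - (i : ℕ) < j2 := by omega
      have := hYd (j2 - 1 - (i : ℕ)) hq
      have hidx : n - 1 - (n - j2 + (j2 - 1 - (i : ℕ))) = (i : ℕ) := by omega
      simp only [bY, hidx] at this
      rw [dif_pos i.isLt] at this
      simp only [Fin.eta] at this
      revert this
      cases t i <;> cases u i <;> cases σ i <;> simp
    · by_cases hi1 : n - j1 ≤ (i : ℕ)
      · have hq : (i : ℕ) - (n - j1) < j1 := by omega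
        have := hXd ((i : ℕ) - (n - j1)) hq
        have hidx : n - j1 + ((i : ℕ) - (n - j1)) = (i : ℕ) := by omega
        simp only [bX, hidx] at this
        rw [dif_pos i.isLt, dif_pos i.isLt] at this
        simpa using this
      · -- i = j2 necessarily
        have hij : (i : ℕ) = j2 := by omega
        have hj2n : j2 < n := by omega
        have : t ⟨j2, hj2n⟩ = u ⟨j2, hj2n⟩ := by simpa [dif_pos hj2n] using hφ
        have hie : i = (⟨j2, hj2n⟩ : Fin n) := Fin.ext hij
        rw [hie]; exact this
  calc (Finset.univ.filter _).card ≤ (Finset.univ : Finset Bool).card :=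
        Finset.card_le_card_of_injOn _ (fun _ _ => Finset.mem_univ _) hinj
    _ = 2 := by simp


lemma hamX_eq (n : ℕ) (t : Fin n → Bool) :
    hamX n t = (ksum n (bX n t) : ℝ) / 2 ^ n := by
  have : (ksum n (bX n t) : ℝ) = ∑ i ∈ Finset.range n, (fun i : ℕ =>
      (cond (bX n t i) ((2:ℝ) ^ i) 0)) i := by
    rw [ksum, Nat.cast_sum]
    refine Finset.sum_congr rfl fun i _ => ?_
    cases hb : bX n t i <;> simp [hb]
  rw [this, ← Fin.sum_univ_eq_sum_range, hamX, Finset.sum_div]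
  refine Finset.sum_congr rfl fun i _ => ?_
  have hb : bX n t (i : ℕ) = t i := by simp [bX, i.isLt]
  rw [hb]
  have hp : (2:ℝ) ^ ((i : ℕ)) / 2 ^ n = 1 / 2 ^ (n - (i : ℕ)) := by
    rw [div_eq_div_iff (by positivity) (by positivity), one_mul, ← pow_add]
    congr 1
    omega
  cases h : t i <;> simp [h, hp]

lemma hamY_eq (n : ℕ) (σ t : Fin n → Bool) :
    hamY n σ t = (ksum n (bY n σ t) : ℝ) / 2 ^ n := by
  have : (ksum n (bY n σ t) : ℝ) = ∑ q ∈ Finset.range n, (cond (bY n σ t q) ((2:ℝ) ^ q) 0) := by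
    rw [ksum, Nat.cast_sum]
    refine Finset.sum_congr rfl fun q _ => ?_
    cases hb : bY n σ t q <;> simp [hb]
  rw [this]
  rw [Finset.sum_div]
  rw [hamY]
  rw [← Fin.sum_univ_eq_sum_range (fun q => (cond (bY n σ t q) ((2:ℝ) ^ q) 0) / 2 ^ n) n]
  refine Finset.sum_nbij' (fun i => ⟨n - 1 - (i : ℕ), by omega⟩) (fun i => ⟨n - 1 - (i : ℕ), by omega⟩)
    (fun _ _ => Finset.mem_univ _) (fun _ _ => Finset.mem_univ _)
    (fun i _ => by ext; simp; omega) (fun i _ => by ext; simp; omega) ?_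
  intro i _
  have hlt : n - 1 - ((n:ℕ) - 1 - (i:ℕ)) < n := by omega
  have hval : n - 1 - (n - 1 - (i : ℕ)) = (i : ℕ) := by omega
  simp only [bY]
  rw [dif_pos (by omega : n - 1 - (n - 1 - (i : ℕ)) < n)]
  have : (⟨n - 1 - (n - 1 - (i : ℕ)), by omega⟩ : Fin n) = i := Fin.ext hval
  rw [this]
  have hp : ((2:ℝ) ^ ((n:ℕ) - 1 - (i:ℕ))) / 2 ^ n = 1 / 2 ^ ((i : ℕ) + 1) := by
    rw [div_eq_div_iff (by positivity) (by positivity), one_mul, ← pow_add]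
    congr 1
    omega
  cases h : xor (t i) (σ i) <;> simp [h, hp]


/-- value of `∫ (if x < t) * haar j m t` -/
noncomputable def Gval (j m : ℕ) (x : ℝ) : ℝ :=
  max 0 ((2 * m + 1 : ℝ) / 2 ^ (j + 1) - max ((2 * m : ℝ) / 2 ^ (j + 1)) x)
    - max 0 ((2 * m + 2 : ℝ) / 2 ^ (j + 1) - max ((2 * m + 1 : ℝ) / 2 ^ (j + 1)) x)

lemma Gval_abs_le (j m : ℕ) (x : ℝ) : |Gval j m x| ≤ 1 / 2 ^ (j + 1) := by
  have hδ : (0:ℝ) < 1 / 2 ^ (j + 1) := by positivity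
  set c1 : ℝ := (2 * m : ℝ) / 2 ^ (j + 1)
  set c2 : ℝ := (2 * m + 1 : ℝ) / 2 ^ (j + 1)
  set c3 : ℝ := (2 * m + 2 : ℝ) / 2 ^ (j + 1)
  have h12 : c2 - c1 = 1 / 2 ^ (j + 1) := by simp only [c1, c2]; ring
  have h23 : c3 - c2 = 1 / 2 ^ (j + 1) := by simp only [c2, c3]; ring
  have hA0 : 0 ≤ max 0 (c2 - max c1 x) := le_max_left _ _
  have hB0 : 0 ≤ max 0 (c3 - max c2 x) := le_max_left _ _
  have hA : max 0 (c2 - max c1 x) ≤ 1 / 2 ^ (j + 1) := by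
    apply max_le hδ.le
    have := le_max_left c1 x
    linarith
  have hB : max 0 (c3 - max c2 x) ≤ 1 / 2 ^ (j + 1) := by
    apply max_le hδ.le
    have := le_max_left c2 x
    linarith
  rw [abs_le]
  constructor <;> simp only [Gval] <;> [linarith; linarith]

lemma Gval_eq_zero (j m : ℕ) (x : ℝ)
    (h : x ≤ (2 * m : ℝ) / 2 ^ (j + 1) ∨ (2 * m + 2 : ℝ) / 2 ^ (j + 1) ≤ x) :
    Gval j m x = 0 := by
  have hp : (0:ℝ) < 2 ^ (j + 1) := by positivity
  set c1 : ℝ := (2 * m : ℝ) / 2 ^ (j + 1) with hc1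
  set c2 : ℝ := (2 * m + 1 : ℝ) / 2 ^ (j + 1) with hc2
  set c3 : ℝ := (2 * m + 2 : ℝ) / 2 ^ (j + 1) with hc3
  have h12 : c1 ≤ c2 := by rw [hc1, hc2]; gcongr; linarith
  have h23 : c2 ≤ c3 := by rw [hc2, hc3]; gcongr <;> linarith
  have he : c2 - c1 = c3 - c2 := by rw [hc1, hc2, hc3]; ring
  rcases h with h | h
  · rw [Gval, ← hc1, ← hc2, ← hc3, max_eq_left h, max_eq_left (h.trans h12),
      max_eq_right (by linarith : (0:ℝ) ≤ c2 - c1), max_eq_right (by linarith : (0:ℝ) ≤ c3 - c2)]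
    linarith
  · rw [Gval, ← hc1, ← hc2, ← hc3, max_eq_right (by linarith : c1 ≤ x),
      max_eq_right (by linarith : c2 ≤ x),
      max_eq_left (by linarith : c2 - x ≤ 0), max_eq_left (by linarith : c3 - x ≤ 0)]
    norm_num

/-- from real dyadic-interval bounds on `K/2^n` to natural bounds -/
lemma nat_bounds (j n m K : ℕ) (hj : j ≤ n)
    (hlo : (m : ℝ) / 2 ^ j < (K : ℝ) / 2 ^ n) (hhi : (K : ℝ) / 2 ^ n < ((m : ℝ) + 1) / 2 ^ j) :
    m * 2 ^ (n - j) < K ∧ K < (m + 1) * 2 ^ (n - j) := by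
  have hD : (2:ℝ) ^ (n - j) * 2 ^ j = 2 ^ n := by rw [← pow_add]; congr 1; omega
  have h2j : (0:ℝ) < 2 ^ j := by positivity
  have h2n : (0:ℝ) < 2 ^ n := by positivity
  rw [div_lt_div_iff₀ h2j h2n] at hlo
  rw [div_lt_div_iff₀ h2n h2j] at hhi
  constructor
  · have : ((m * 2 ^ (n - j) : ℕ) : ℝ) < K := by
      push_cast
      have : (m:ℝ) * 2 ^ (n - j) * 2 ^ j < (K:ℝ) * 2 ^ j := by
        calc (m:ℝ) * 2 ^ (n - j) * 2 ^ j = m * 2 ^ n := by rw [mul_assoc, hD]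
        _ < K * 2 ^ j := by linarith
      exact lt_of_mul_lt_mul_right this h2j.le
    exact_mod_cast this
  · have : (K : ℝ) < (((m + 1) * 2 ^ (n - j) : ℕ) : ℝ) := by
      push_cast
      have : (K:ℝ) * 2 ^ j < ((m:ℝ) + 1) * 2 ^ (n - j) * 2 ^ j := by
        calc (K:ℝ) * 2 ^ j < (m + 1) * 2 ^ n := hhi
        _ = ((m:ℝ) + 1) * 2 ^ (n - j) * 2 ^ j := by rw [mul_assoc, hD]
      exact lt_of_mul_lt_mul_right this h2j.le
    exact_mod_cast this

lemma div_eq_of_bounds {D M K : ℕ} (h1 : M * D ≤ K) (h2 : K < (M + 1) * D) : K / D = M :=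
  Nat.div_eq_of_lt_le h1 (by simpa [Nat.succ_eq_add_one] using h2)

/-- the unreflected case -/
lemma div_coord_false (j n m K : ℕ) (hj : j ≤ n)
    (hlo : (m : ℝ) / 2 ^ j < (K : ℝ) / 2 ^ n) (hhi : (K : ℝ) / 2 ^ n < ((m : ℝ) + 1) / 2 ^ j) :
    K / 2 ^ (n - j) = m := by
  obtain ⟨b1, b2⟩ := nat_bounds j n m K hj hlo hhi
  exact div_eq_of_bounds b1.le b2

/-- the reflected case: `k ≤ 2^n` and `(2^n - k)/2^n` lies in the interval -/
lemma div_coord_true (j n m k : ℕ) (hj : j ≤ n) (hm : m < 2 ^ j) (hk : k ≤ 2 ^ n)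
    (hlo : (m : ℝ) / 2 ^ j < ((2 ^ n - k : ℕ) : ℝ) / 2 ^ n)
    (hhi : ((2 ^ n - k : ℕ) : ℝ) / 2 ^ n < ((m : ℝ) + 1) / 2 ^ j) :
    k / 2 ^ (n - j) = 2 ^ j - 1 - m := by
  obtain ⟨b1, b2⟩ := nat_bounds j n m (2 ^ n - k) hj hlo hhi
  have hE : 2 ^ j * 2 ^ (n - j) = 2 ^ n := by rw [← pow_add]; congr 1; omega
  have h1j : (1:ℕ) ≤ 2 ^ j := Nat.one_le_two_pow
  zify [hk] at b1 b2
  zify at hE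
  apply div_eq_of_bounds
  · zify [hk, (by omega : m ≤ 2 ^ j - 1), h1j]
    linarith
  · zify [hk, (by omega : m ≤ 2 ^ j - 1), h1j]
    linarith


lemma haar_eq (j m : ℕ) (t : ℝ) :
    haar j m t = (Set.Ico ((2 * m : ℝ) / 2 ^ (j + 1)) ((2 * m + 1 : ℝ) / 2 ^ (j + 1))).indicator
        (fun _ => (1:ℝ)) t
      - (Set.Ico ((2 * m + 1 : ℝ) / 2 ^ (j + 1)) ((2 * m + 2 : ℝ) / 2 ^ (j + 1))).indicator
        (fun _ => (1:ℝ)) t := by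
  simp only [haar, Set.indicator, Set.mem_Ico]
  have hp : (0:ℝ) < 2 ^ (j + 1) := by positivity
  split_ifs with h1 h2 h2 <;> norm_num <;> linarith [h1.1, h1.2, h2.1, h2.2]

lemma measurable_haar (j m : ℕ) : Measurable (haar j m) := by
  have : haar j m = fun t =>
      (Set.Ico ((2 * m : ℝ) / 2 ^ (j + 1)) ((2 * m + 1 : ℝ) / 2 ^ (j + 1))).indicator
        (fun _ => (1:ℝ)) t
      - (Set.Ico ((2 * m + 1 : ℝ) / 2 ^ (j + 1)) ((2 * m + 2 : ℝ) / 2 ^ (j + 1))).indicator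
        (fun _ => (1:ℝ)) t := funext (haar_eq j m)
  rw [this]
  exact ((measurable_const.indicator measurableSet_Ico).sub
    (measurable_const.indicator measurableSet_Ico))

lemma abs_haar_le (j m : ℕ) (t : ℝ) : ‖haar j m t‖ ≤ 1 := by
  rw [Real.norm_eq_abs, haar]
  split_ifs <;> norm_num

lemma integrableOn_haar (j m : ℕ) : IntegrableOn (haar j m) (Set.Ico (0:ℝ) 1) := by
  have h1 : volume (Set.Ico (0:ℝ) 1) < ⊤ := by
    rw [Real.volume_Ico]; exact ENNReal.ofReal_lt_top
  apply Integrable.mono' (g := fun _ => (1:ℝ))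
  · exact (integrableOn_const_iff (C := (1:ℝ))).2 (Or.inr h1)
  · exact (measurable_haar j m).aestronglyMeasurable
  · exact Filter.Eventually.of_forall fun t => abs_haar_le j m t

lemma integrableOn_ite_mul_haar (j m : ℕ) (x : ℝ) :
    IntegrableOn (fun t => (if x < t then (1:ℝ) else 0) * haar j m t) (Set.Ico (0:ℝ) 1) := by
  apply Integrable.bdd_mul (c := 1) (integrableOn_haar j m)
  · exact (Measurable.ite measurableSet_Ioi measurable_const measurable_const).aestronglyMeasurable
  · exact Filter.Eventually.of_forall fun t => by split_ifs <;> norm_num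

lemma integrableOn_id_mul_haar (j m : ℕ) :
    IntegrableOn (fun t => t * haar j m t) (Set.Ico (0:ℝ) 1) := by
  have hid : IntegrableOn (fun t : ℝ => t) (Set.Ico (0:ℝ) 1) :=
    (continuous_id.integrableOn_Icc (a := (0:ℝ)) (b := 1)).mono_set Set.Ico_subset_Icc_self
  have := Integrable.bdd_mul (c := 1) hid ((measurable_haar j m).aestronglyMeasurable.restrict)
    (Filter.Eventually.of_forall fun t => abs_haar_le j m t)
  exact this.congr (Filter.Eventually.of_forall fun t => mul_comm _ _)

lemma volume_ico_inter_ioi (p q x : ℝ) :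
    (volume (Set.Ico p q ∩ Set.Ioi x)).toReal = max 0 (q - max p x) := by
  have hsub1 : Set.Ioo (max p x) q ⊆ Set.Ico p q ∩ Set.Ioi x := by
    intro t ht
    obtain ⟨h1, h2⟩ := ht
    exact ⟨⟨(le_max_left p x).trans h1.le, h2⟩, (le_max_right p x).trans_lt h1⟩
  have hsub2 : Set.Ico p q ∩ Set.Ioi x ⊆ Set.Icc (max p x) q := by
    intro t ht
    obtain ⟨⟨h1, h2⟩, h3⟩ := ht
    exact ⟨max_le h1 h3.le, h2.le⟩
  have hv : volume (Set.Ico p q ∩ Set.Ioi x) = ENNReal.ofReal (q - max p x) := by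
    refine le_antisymm ?_ ?_
    · calc volume (Set.Ico p q ∩ Set.Ioi x) ≤ volume (Set.Icc (max p x) q) := measure_mono hsub2
        _ = ENNReal.ofReal (q - max p x) := Real.volume_Icc
    · calc ENNReal.ofReal (q - max p x) = volume (Set.Ioo (max p x) q) := Real.volume_Ioo.symm
        _ ≤ volume (Set.Ico p q ∩ Set.Ioi x) := measure_mono hsub1
  rw [hv, ENNReal.toReal_ofReal']
  exact max_comm _ _

lemma ico_subset_unit {p q : ℝ} (hp : 0 ≤ p) (hq : q ≤ 1) :
    Set.Ico p q ⊆ Set.Ico (0:ℝ) 1 := fun t ht => ⟨hp.trans ht.1, ht.2.trans_le hq⟩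

lemma integral_ite_mul_indicator (x p q : ℝ) (hp : 0 ≤ p) (hq : q ≤ 1) :
    ∫ t in Set.Ico (0:ℝ) 1,
      (if x < t then (1:ℝ) else 0) * (Set.Ico p q).indicator (fun _ => (1:ℝ)) t
    = max 0 (q - max p x) := by
  have hpt : ∀ t, (if x < t then (1:ℝ) else 0) * (Set.Ico p q).indicator (fun _ => (1:ℝ)) t
      = (Set.Ico p q ∩ Set.Ioi x).indicator (fun _ => (1:ℝ)) t := by
    intro t
    by_cases h1 : t ∈ Set.Ico p q <;> by_cases h2 : x < t <;>
      simp [Set.indicator, h1, h2, Set.mem_Ioi, not_lt.mpr]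
  rw [show (fun t => (if x < t then (1:ℝ) else 0) * (Set.Ico p q).indicator (fun _ => (1:ℝ)) t)
      = fun t => (Set.Ico p q ∩ Set.Ioi x).indicator (fun _ => (1:ℝ)) t from funext hpt,
    setIntegral_indicator (measurableSet_Ico.inter measurableSet_Ioi),
    Set.inter_eq_self_of_subset_right
      ((Set.inter_subset_left).trans (ico_subset_unit hp hq)),
    setIntegral_const, smul_eq_mul, mul_one]
  exact volume_ico_inter_ioi p q x

lemma integral_indicator_mul_id (p q : ℝ) (hp : 0 ≤ p) (hpq : p ≤ q) (hq : q ≤ 1) :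
    ∫ t in Set.Ico (0:ℝ) 1, (Set.Ico p q).indicator (fun _ => (1:ℝ)) t * t
    = (q ^ 2 - p ^ 2) / 2 := by
  have hpt : ∀ t, (Set.Ico p q).indicator (fun _ => (1:ℝ)) t * t
      = (Set.Ico p q).indicator (fun s => s) t := by
    intro t
    by_cases h1 : t ∈ Set.Ico p q <;> simp [Set.indicator, h1]
  rw [show (fun t => (Set.Ico p q).indicator (fun _ => (1:ℝ)) t * t)
      = fun t => (Set.Ico p q).indicator (fun s => s) t from funext hpt,
    setIntegral_indicator measurableSet_Ico,
    Set.inter_eq_self_of_subset_right (ico_subset_unit hp hq),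
    MeasureTheory.integral_Ico_eq_integral_Ioo,
    ← MeasureTheory.integral_Ioc_eq_integral_Ioo,
    ← intervalIntegral.integral_of_le hpq]
  simp

lemma c_bounds (j m : ℕ) (hm : m < 2 ^ j) :
    (0:ℝ) ≤ (2 * m : ℝ) / 2 ^ (j + 1) ∧ (2 * m : ℝ) / 2 ^ (j + 1) ≤ (2 * m + 1 : ℝ) / 2 ^ (j + 1)
    ∧ (2 * m + 1 : ℝ) / 2 ^ (j + 1) ≤ (2 * m + 2 : ℝ) / 2 ^ (j + 1)
    ∧ (2 * m + 2 : ℝ) / 2 ^ (j + 1) ≤ 1 := by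
  have hp : (0:ℝ) < 2 ^ (j + 1) := by positivity
  have hmr : (m:ℝ) + 1 ≤ 2 ^ j := by exact_mod_cast Nat.succ_le_of_lt hm
  have h2 : (2:ℝ) ^ (j + 1) = 2 * 2 ^ j := by rw [pow_succ]; ring
  refine ⟨by positivity, by gcongr <;> linarith, by gcongr <;> linarith, ?_⟩
  rw [div_le_one hp, h2]
  linarith

lemma integrableOn_ite_mul_ind (x p q : ℝ) :
    IntegrableOn (fun t => (if x < t then (1:ℝ) else 0)
      * (Set.Ico p q).indicator (fun _ => (1:ℝ)) t) (Set.Ico (0:ℝ) 1) := by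
  have h1 : volume (Set.Ico (0:ℝ) 1) < ⊤ := by
    rw [Real.volume_Ico]; exact ENNReal.ofReal_lt_top
  have hind : IntegrableOn ((Set.Ico p q).indicator (fun _ => (1:ℝ))) (Set.Ico (0:ℝ) 1) :=
    Integrable.indicator ((integrableOn_const_iff (C := (1:ℝ))).2 (Or.inr h1)) measurableSet_Ico
  apply Integrable.bdd_mul (c := 1) hind
  · exact (Measurable.ite measurableSet_Ioi measurable_const measurable_const).aestronglyMeasurable
  · exact Filter.Eventually.of_forall fun t => by split_ifs <;> norm_num

lemma integral_ite_mul_haar (j m : ℕ) (hm : m < 2 ^ j) (x : ℝ) :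
    ∫ t in Set.Ico (0:ℝ) 1, (if x < t then (1:ℝ) else 0) * haar j m t = Gval j m x := by
  obtain ⟨hb0, hb1, hb2, hb3⟩ := c_bounds j m hm
  have hpt : (fun t => (if x < t then (1:ℝ) else 0) * haar j m t)
      = fun t => (if x < t then (1:ℝ) else 0)
          * (Set.Ico ((2 * m : ℝ) / 2 ^ (j + 1)) ((2 * m + 1 : ℝ) / 2 ^ (j + 1))).indicator
            (fun _ => (1:ℝ)) t
        - (if x < t then (1:ℝ) else 0)
          * (Set.Ico ((2 * m + 1 : ℝ) / 2 ^ (j + 1)) ((2 * m + 2 : ℝ) / 2 ^ (j + 1))).indicator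
            (fun _ => (1:ℝ)) t := by
    funext t; rw [haar_eq]; ring
  rw [hpt, integral_sub (integrableOn_ite_mul_ind _ _ _) (integrableOn_ite_mul_ind _ _ _),
    integral_ite_mul_indicator x _ _ hb0 (hb2.trans hb3),
    integral_ite_mul_indicator x _ _ (hb0.trans hb1) hb3, Gval]

lemma integral_id_mul_haar (j m : ℕ) (hm : m < 2 ^ j) :
    ∫ t in Set.Ico (0:ℝ) 1, t * haar j m t = -(1 / 2 ^ (2 * j + 2)) := by
  obtain ⟨hb0, hb1, hb2, hb3⟩ := c_bounds j m hm
  have h1 : volume (Set.Ico (0:ℝ) 1) < ⊤ := by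
    rw [Real.volume_Ico]; exact ENNReal.ofReal_lt_top
  have hid : IntegrableOn (fun t : ℝ => t) (Set.Ico (0:ℝ) 1) :=
    (continuous_id.integrableOn_Icc (a := (0:ℝ)) (b := 1)).mono_set Set.Ico_subset_Icc_self
  have hint : ∀ p q : ℝ, IntegrableOn
      (fun t => (Set.Ico p q).indicator (fun _ => (1:ℝ)) t * t) (Set.Ico (0:ℝ) 1) := by
    intro p q
    apply Integrable.bdd_mul (c := 1) hid
    · exact (measurable_const.indicator measurableSet_Ico).aestronglyMeasurable
    · refine Filter.Eventually.of_forall fun t => ?_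
      by_cases h : t ∈ Set.Ico p q <;> simp [Set.indicator, h]
  have hpt : (fun t : ℝ => t * haar j m t)
      = fun t => (Set.Ico ((2 * m : ℝ) / 2 ^ (j + 1)) ((2 * m + 1 : ℝ) / 2 ^ (j + 1))).indicator
            (fun _ => (1:ℝ)) t * t
        - (Set.Ico ((2 * m + 1 : ℝ) / 2 ^ (j + 1)) ((2 * m + 2 : ℝ) / 2 ^ (j + 1))).indicator
            (fun _ => (1:ℝ)) t * t := by
    funext t; rw [haar_eq]; ring
  rw [hpt, integral_sub (hint _ _) (hint _ _),
    integral_indicator_mul_id _ _ hb0 hb1 (hb2.trans hb3),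
    integral_indicator_mul_id _ _ (hb0.trans hb1) hb2 hb3]
  have hp : (0:ℝ) < 2 ^ (j + 1) := by positivity
  have hpw : ((2:ℝ) ^ (j + 1)) ^ 2 = 2 ^ (2 * j + 2) := by
    rw [← pow_mul]; ring_nf
  field_simp
  nlinarith [hpw, hp]


end DiscAux

open DiscAux

/-- Proposition (ii), first part: for the local discrepancy `D` of the symmetrized
Hammersley type multiset `R̃_n`, if `j₁ + j₂ ≥ n - 1` and `j₁, j₂ ≤ n` then
`|μ_{(j₁,j₂),(m₁,m₂)}(D)| ≤ 2^{-(n+j₁+j₂)}`. -/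
theorem disc_haar_coeff_medium (n : ℕ) (σ : Fin n → Bool) (j1 j2 m1 m2 : ℕ)
    (hj : n ≤ j1 + j2 + 1) (hj1 : j1 ≤ n) (hj2 : j2 ≤ n)
    (h1 : m1 < 2 ^ j1) (h2 : m2 < 2 ^ j2) :
    |∫ t1 in Set.Ico (0 : ℝ) 1, ∫ t2 in Set.Ico (0 : ℝ) 1,
      discSym n σ t1 t2 * haar j1 m1 t1 * haar j2 m2 t2| ≤ 1 / 2 ^ (n + j1 + j2) := by
  classical
  -- Step 1: inner integral
  have inner : ∀ t1 : ℝ, (∫ t2 in Set.Ico (0 : ℝ) 1,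
      discSym n σ t1 t2 * haar j1 m1 t1 * haar j2 m2 t2)
      = (∑ z : (Fin n → Bool) × Bool × Bool,
          (Gval j2 m2 (symPoint n σ z).2 / 2 ^ (n + 2))
            * ((if (symPoint n σ z).1 < t1 then (1:ℝ) else 0) * haar j1 m1 t1))
        + (1 / 2 ^ (2 * j2 + 2)) * (t1 * haar j1 m1 t1) := by
    intro t1
    have key : (fun t2 => discSym n σ t1 t2 * haar j1 m1 t1 * haar j2 m2 t2)
        = fun t2 => (∑ z : (Fin n → Bool) × Bool × Bool,
            ((if (symPoint n σ z).1 < t1 then (1:ℝ) else 0) * haar j1 m1 t1 / 2 ^ (n + 2))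
              * ((if (symPoint n σ z).2 < t2 then (1:ℝ) else 0) * haar j2 m2 t2))
          - (t1 * haar j1 m1 t1) * (t2 * haar j2 m2 t2) := by
      funext t2
      rw [discSym, sub_mul, sub_mul, Finset.sum_div, Finset.sum_mul, Finset.sum_mul]
      congr 1
      · refine Finset.sum_congr rfl fun z _ => ?_
        have hsplit : (if (symPoint n σ z).1 < t1 ∧ (symPoint n σ z).2 < t2 then (1:ℝ) else 0)
            = (if (symPoint n σ z).1 < t1 then (1:ℝ) else 0)
              * (if (symPoint n σ z).2 < t2 then (1:ℝ) else 0) := by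
          by_cases hx : (symPoint n σ z).1 < t1 <;> by_cases hy : (symPoint n σ z).2 < t2 <;>
            simp [hx, hy]
        rw [hsplit]
        ring
      · ring
    rw [key, integral_sub
        (integrable_finset_sum _ (fun z _ =>
          ((integrableOn_ite_mul_haar j2 m2 _).const_mul _)))
        ((integrableOn_id_mul_haar j2 m2).const_mul _),
      integral_finset_sum _ (fun z _ => ((integrableOn_ite_mul_haar j2 m2 _).const_mul _))]
    have hterm : ∀ z : (Fin n → Bool) × Bool × Bool,
        (∫ t2 in Set.Ico (0:ℝ) 1,
          ((if (symPoint n σ z).1 < t1 then (1:ℝ) else 0) * haar j1 m1 t1 / 2 ^ (n + 2))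
            * ((if (symPoint n σ z).2 < t2 then (1:ℝ) else 0) * haar j2 m2 t2))
        = ((if (symPoint n σ z).1 < t1 then (1:ℝ) else 0) * haar j1 m1 t1 / 2 ^ (n + 2))
            * Gval j2 m2 (symPoint n σ z).2 := by
      intro z
      rw [MeasureTheory.integral_const_mul, integral_ite_mul_haar j2 m2 h2]
    rw [Finset.sum_congr rfl fun z _ => hterm z, MeasureTheory.integral_const_mul,
      integral_id_mul_haar j2 m2 h2]
    rw [Finset.sum_congr rfl (fun z _ => by ring :
      ∀ z ∈ (Finset.univ : Finset ((Fin n → Bool) × Bool × Bool)),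
        ((if (symPoint n σ z).1 < t1 then (1:ℝ) else 0) * haar j1 m1 t1 / 2 ^ (n + 2))
            * Gval j2 m2 (symPoint n σ z).2
        = (Gval j2 m2 (symPoint n σ z).2 / 2 ^ (n + 2))
            * ((if (symPoint n σ z).1 < t1 then (1:ℝ) else 0) * haar j1 m1 t1))]
    ring
  simp only [inner]
  -- Step 2: outer integral
  rw [integral_add
      (integrable_finset_sum _ (fun z _ =>
        ((integrableOn_ite_mul_haar j1 m1 _).const_mul _)))
      ((integrableOn_id_mul_haar j1 m1).const_mul _),
    integral_finset_sum _ (fun z _ => ((integrableOn_ite_mul_haar j1 m1 _).const_mul _)),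
    MeasureTheory.integral_const_mul, integral_id_mul_haar j1 m1 h1]
  have houter : ∀ z : (Fin n → Bool) × Bool × Bool,
      (∫ t1 in Set.Ico (0:ℝ) 1,
        (Gval j2 m2 (symPoint n σ z).2 / 2 ^ (n + 2))
          * ((if (symPoint n σ z).1 < t1 then (1:ℝ) else 0) * haar j1 m1 t1))
      = (Gval j2 m2 (symPoint n σ z).2 / 2 ^ (n + 2)) * Gval j1 m1 (symPoint n σ z).1 := by
    intro z
    rw [MeasureTheory.integral_const_mul, integral_ite_mul_haar j1 m1 h1]
  rw [Finset.sum_congr rfl fun z _ => houter z]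
  -- Step 3: the bound
  have hN : (0:ℝ) < 2 ^ (n + 2) := by positivity
  have habs : ∀ z : (Fin n → Bool) × Bool × Bool,
      |(Gval j2 m2 (symPoint n σ z).2 / 2 ^ (n + 2)) * Gval j1 m1 (symPoint n σ z).1|
      = |Gval j1 m1 (symPoint n σ z).1 * Gval j2 m2 (symPoint n σ z).2| / 2 ^ (n + 2) := by
    intro z
    rw [abs_mul, abs_div, abs_mul, abs_of_pos hN]
    ring
  -- bound on the sum of |G1 * G2|
  have hS : (∑ z : (Fin n → Bool) × Bool × Bool,
      |Gval j1 m1 (symPoint n σ z).1 * Gval j2 m2 (symPoint n σ z).2|)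
      ≤ 8 * (1 / 2 ^ (j1 + 1) * (1 / 2 ^ (j2 + 1))) := by
    rw [Fintype.sum_prod_type, Finset.sum_comm]
    have hper : ∀ p : Bool × Bool,
        (∑ t : Fin n → Bool,
          |Gval j1 m1 (symPoint n σ (t, p)).1 * Gval j2 m2 (symPoint n σ (t, p)).2|)
        ≤ 2 * (1 / 2 ^ (j1 + 1) * (1 / 2 ^ (j2 + 1))) := by
      intro p
      set M1 : ℕ := cond p.1 (2 ^ j1 - 1 - m1) m1 with hM1
      set M2 : ℕ := cond p.2 (2 ^ j2 - 1 - m2) m2 with hM2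
      have hz : ∀ t : Fin n → Bool,
          |Gval j1 m1 (symPoint n σ (t, p)).1 * Gval j2 m2 (symPoint n σ (t, p)).2| ≠ 0 →
          (ksum n (bX n t) / 2 ^ (n - j1) = M1 ∧ ksum n (bY n σ t) / 2 ^ (n - j2) = M2) := by
        intro t hne
        rw [Ne, abs_eq_zero, mul_eq_zero] at hne
        push_neg at hne
        obtain ⟨hne1, hne2⟩ := hne
        have hX : (2 * m1 : ℝ) / 2 ^ (j1 + 1) < (symPoint n σ (t, p)).1
            ∧ (symPoint n σ (t, p)).1 < (2 * m1 + 2 : ℝ) / 2 ^ (j1 + 1) := by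
          by_contra hcon
          push_neg at hcon
          rcases le_or_gt (symPoint n σ (t, p)).1 ((2 * m1 : ℝ) / 2 ^ (j1 + 1)) with h | h
          · exact hne1 (Gval_eq_zero _ _ _ (Or.inl h))
          · exact hne1 (Gval_eq_zero _ _ _ (Or.inr (hcon h)))
        have hY : (2 * m2 : ℝ) / 2 ^ (j2 + 1) < (symPoint n σ (t, p)).2
            ∧ (symPoint n σ (t, p)).2 < (2 * m2 + 2 : ℝ) / 2 ^ (j2 + 1) := by
          by_contra hcon
          push_neg at hcon
          rcases le_or_gt (symPoint n σ (t, p)).2 ((2 * m2 : ℝ) / 2 ^ (j2 + 1)) with h | h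
          · exact hne2 (Gval_eq_zero _ _ _ (Or.inl h))
          · exact hne2 (Gval_eq_zero _ _ _ (Or.inr (hcon h)))
        -- convert interval endpoints
        have hc1 : (2 * m1 : ℝ) / 2 ^ (j1 + 1) = (m1 : ℝ) / 2 ^ j1 := by
          rw [pow_succ]; field_simp
        have hc3 : (2 * m1 + 2 : ℝ) / 2 ^ (j1 + 1) = ((m1 : ℝ) + 1) / 2 ^ j1 := by
          rw [pow_succ]; field_simp
        have hd1 : (2 * m2 : ℝ) / 2 ^ (j2 + 1) = (m2 : ℝ) / 2 ^ j2 := by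
          rw [pow_succ]; field_simp
        have hd3 : (2 * m2 + 2 : ℝ) / 2 ^ (j2 + 1) = ((m2 : ℝ) + 1) / 2 ^ j2 := by
          rw [pow_succ]; field_simp
        rw [hc1, hc3] at hX
        rw [hd1, hd3] at hY
        have hkX := ksum_lt n (bX n t)
        have hkY := ksum_lt n (bY n σ t)
        constructor
        · -- X coordinate
          have hXval : (symPoint n σ (t, p)).1
              = if p.1 then 1 - (ksum n (bX n t) : ℝ) / 2 ^ n
                else (ksum n (bX n t) : ℝ) / 2 ^ n := by
            simp only [symPoint, hamX_eq]
          cases hp1 : p.1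
          · rw [hXval, hp1, if_neg (by simp)] at hX
            rw [hM1, hp1]
            exact div_coord_false j1 n m1 _ hj1 hX.1 hX.2
          · rw [hXval, hp1, if_pos rfl] at hX
            rw [hM1, hp1]
            have hcast : ((2 ^ n - ksum n (bX n t) : ℕ) : ℝ) / 2 ^ n
                = 1 - (ksum n (bX n t) : ℝ) / 2 ^ n := by
              rw [Nat.cast_sub hkX.le]
              push_cast
              field_simp
            apply div_coord_true j1 n m1 _ hj1 h1 hkX.le <;> rw [hcast]
            · exact hX.1
            · exact hX.2
        · -- Y coordinate
          have hYval : (symPoint n σ (t, p)).2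
              = if p.2 then 1 - (ksum n (bY n σ t) : ℝ) / 2 ^ n
                else (ksum n (bY n σ t) : ℝ) / 2 ^ n := by
            simp only [symPoint, hamY_eq]
          cases hp2 : p.2
          · rw [hYval, hp2, if_neg (by simp)] at hY
            rw [hM2, hp2]
            exact div_coord_false j2 n m2 _ hj2 hY.1 hY.2
          · rw [hYval, hp2, if_pos rfl] at hY
            rw [hM2, hp2]
            have hcast : ((2 ^ n - ksum n (bY n σ t) : ℕ) : ℝ) / 2 ^ n
                = 1 - (ksum n (bY n σ t) : ℝ) / 2 ^ n := by
              rw [Nat.cast_sub hkY.le]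
              push_cast
              field_simp
            apply div_coord_true j2 n m2 _ hj2 h2 hkY.le <;> rw [hcast]
            · exact hY.1
            · exact hY.2
      calc (∑ t : Fin n → Bool,
            |Gval j1 m1 (symPoint n σ (t, p)).1 * Gval j2 m2 (symPoint n σ (t, p)).2|)
          = ∑ t ∈ Finset.univ.filter (fun t : Fin n → Bool =>
              ksum n (bX n t) / 2 ^ (n - j1) = M1 ∧ ksum n (bY n σ t) / 2 ^ (n - j2) = M2),
            |Gval j1 m1 (symPoint n σ (t, p)).1 * Gval j2 m2 (symPoint n σ (t, p)).2| :=
            (Finset.sum_filter_of_ne (fun t _ h => hz t h)).symm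
        _ ≤ (Finset.univ.filter (fun t : Fin n → Bool =>
              ksum n (bX n t) / 2 ^ (n - j1) = M1 ∧ ksum n (bY n σ t) / 2 ^ (n - j2) = M2)).card
            • (1 / 2 ^ (j1 + 1) * (1 / 2 ^ (j2 + 1))) := by
            apply Finset.sum_le_card_nsmul
            intro t _
            rw [abs_mul]
            exact mul_le_mul (Gval_abs_le _ _ _) (Gval_abs_le _ _ _) (abs_nonneg _)
              (by positivity)
        _ ≤ 2 * (1 / 2 ^ (j1 + 1) * (1 / 2 ^ (j2 + 1))) := by
            rw [nsmul_eq_mul]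
            apply mul_le_mul_of_nonneg_right _ (by positivity)
            exact_mod_cast count_le_two n j1 j2 σ hj hj1 hj2 M1 M2
    calc (∑ p : Bool × Bool, ∑ t : Fin n → Bool,
          |Gval j1 m1 (symPoint n σ (t, p)).1 * Gval j2 m2 (symPoint n σ (t, p)).2|)
        ≤ (Finset.univ : Finset (Bool × Bool)).card
            • (2 * (1 / 2 ^ (j1 + 1) * (1 / 2 ^ (j2 + 1)))) :=
          Finset.sum_le_card_nsmul _ _ _ (fun p _ => hper p)
      _ = 8 * (1 / 2 ^ (j1 + 1) * (1 / 2 ^ (j2 + 1))) := by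
          simp
          ring

  -- final numeric estimate
  have hstep : |(∑ z : (Fin n → Bool) × Bool × Bool,
      (Gval j2 m2 (symPoint n σ z).2 / 2 ^ (n + 2)) * Gval j1 m1 (symPoint n σ z).1)
      + 1 / 2 ^ (2 * j2 + 2) * -(1 / 2 ^ (2 * j1 + 2))|
      ≤ 8 * (1 / 2 ^ (j1 + 1) * (1 / 2 ^ (j2 + 1))) / 2 ^ (n + 2)
        + 1 / 2 ^ (2 * j1 + (2 * j2 + 4)) := by
    refine (abs_add_le _ _).trans (add_le_add ?_ ?_)
    · refine (Finset.abs_sum_le_sum_abs _ _).trans ?_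
      rw [Finset.sum_congr rfl fun z _ => habs z, ← Finset.sum_div]
      gcongr
    · have : |1 / 2 ^ (2 * j2 + 2) * -(1 / 2 ^ (2 * j1 + 2))|
          = (1:ℝ) / 2 ^ (2 * j1 + (2 * j2 + 4)) := by
        rw [abs_mul, abs_neg, abs_of_pos (by positivity : (0:ℝ) < 1 / 2 ^ (2 * j2 + 2)),
          abs_of_pos (by positivity : (0:ℝ) < 1 / 2 ^ (2 * j1 + 2)),
          div_mul_div_comm, one_mul, ← pow_add,
          show 2 * j2 + 2 + (2 * j1 + 2) = 2 * j1 + (2 * j2 + 4) by omega]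
      exact this.le
  refine hstep.trans ?_
  -- purely numeric
  set a : ℝ := 2 ^ n with ha
  set b : ℝ := 2 ^ j1 with hb
  set c : ℝ := 2 ^ j2 with hc
  have hapos : (0:ℝ) < a := by rw [ha]; positivity
  have hbpos : (0:ℝ) < b := by rw [hb]; positivity
  have hcpos : (0:ℝ) < c := by rw [hc]; positivity
  have hbnd : a ≤ 2 * (b * c) := by
    rw [ha, hb, hc]
    calc (2:ℝ) ^ n ≤ 2 ^ (j1 + j2 + 1) := by
          apply pow_le_pow_right₀ (by norm_num) hj
      _ = 2 * (2 ^ j1 * 2 ^ j2) := by rw [pow_add, pow_add]; ring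
  have Pn : (2:ℝ) ^ (n + 2) = a * 4 := by rw [ha, pow_add]; norm_num
  have P1 : (2:ℝ) ^ (j1 + 1) = b * 2 := by rw [hb, pow_add]; norm_num
  have P2 : (2:ℝ) ^ (j2 + 1) = c * 2 := by rw [hc, pow_add]; norm_num
  have Pg : (2:ℝ) ^ (n + j1 + j2) = a * b * c := by rw [ha, hb, hc, pow_add, pow_add]
  have Q1 : (2:ℝ) ^ (2 * j1 + (2 * j2 + 4)) = b ^ 2 * c ^ 2 * 16 := by
    rw [hb, hc, pow_add, pow_add, show 2 * j1 = j1 * 2 by ring, show 2 * j2 = j2 * 2 by ring,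
      pow_mul, pow_mul]
    norm_num
    ring
  rw [Pn, P1, P2, Pg, Q1]
  have e1 : 8 * (1 / (b * 2) * (1 / (c * 2))) / (a * 4) = 1 / (2 * (a * b * c)) := by
    field_simp
    ring
  have e2 : (1:ℝ) / (b ^ 2 * c ^ 2 * 16) ≤ 1 / (8 * (a * b * c)) := by
    apply one_div_le_one_div_of_le (by positivity)
    nlinarith [mul_le_mul_of_nonneg_right hbnd (le_of_lt (mul_pos hbpos hcpos))]
  have e3 : 1 / (2 * (a * b * c)) + 1 / (8 * (a * b * c)) ≤ 1 / (a * b * c) := by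
    set d : ℝ := a * b * c with hd
    have hdpos : (0:ℝ) < d := by rw [hd]; positivity
    rw [div_add_div _ _ (by positivity) (by positivity), div_le_div_iff₀ (by positivity) hdpos]
    nlinarith [hdpos]
  rw [e1]
  linarith [e2, e3]
end

section
/- Let n ∈ ℕ, let \tilde{R}_n be a symmetrized Hammersley type point set with N = 2^{n+2} points (for an arbitrary fixed choice function σ), and let D be its local discrepancy function. For all j1, j2 ∈ ℕ₀ with j1 ≥ n or j2 ≥ n, and all m1 ∈ {0,…,2^{j1}−1}, m2 ∈ {0,…,2^{j2}−1}, the Haar coefficient satisfies |μ_{(j1,j2),(m1,m2)}(D)| = 2^{−2(j1+j2+2)}. -/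
open MeasureTheory Set

lemma haar_measurable (j m : ℕ) : Measurable (haar j m) := by
  unfold haar
  refine Measurable.ite ?_ measurable_const (Measurable.ite ?_ measurable_const measurable_const)
  · exact (measurableSet_Ico : MeasurableSet (Ico ((2*m:ℝ)/2^(j+1)) ((2*m+1:ℝ)/2^(j+1))))
  · exact (measurableSet_Ico : MeasurableSet (Ico ((2*m+1:ℝ)/2^(j+1)) ((2*m+2:ℝ)/2^(j+1))))

lemma haar_abs_le (j m : ℕ) (t : ℝ) : |haar j m t| ≤ 1 := by
  unfold haar; split_ifs <;> norm_num

lemma intOn_bdd {f : ℝ → ℝ} (C : ℝ) (hm : Measurable f)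
    (hb : ∀ t ∈ Ico (0:ℝ) 1, |f t| ≤ C) :
    IntegrableOn f (Ico (0:ℝ) 1) := by
  refine Integrable.mono' (g := fun _ => C) ((integrableOn_const_iff (C := C) enorm_ne_top).2 (Or.inr ?_))
    hm.aestronglyMeasurable ?_
  · rw [Real.volume_Ico]; exact ENNReal.ofReal_lt_top
  · filter_upwards [ae_restrict_mem measurableSet_Ico] with t ht using by simpa using hb t ht

lemma haar_eq (j m : ℕ) : haar j m = fun t =>
    (Ico ((2*m:ℝ)/2^(j+1)) ((2*m+1:ℝ)/2^(j+1))).indicator (fun _ => (1:ℝ)) t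
    - (Ico ((2*m+1:ℝ)/2^(j+1)) ((2*m+2:ℝ)/2^(j+1))).indicator (fun _ => (1:ℝ)) t := by
  funext t
  unfold haar
  by_cases h1 : (2*m:ℝ)/2^(j+1) ≤ t ∧ t < (2*m+1:ℝ)/2^(j+1) <;>
  by_cases h2 : (2*m+1:ℝ)/2^(j+1) ≤ t ∧ t < (2*m+2:ℝ)/2^(j+1) <;>
    simp [h1, h2, Set.indicator_apply, Set.mem_Ico]
  · exact absurd h2.1 (not_le.2 h1.2)

lemma ind_int {a c : ℝ} (f : ℝ → ℝ) (hsub : Ico a c ⊆ Ico (0:ℝ) 1) :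
    ∫ t in Ico (0:ℝ) 1, (Ico a c).indicator f t = ∫ t in Ico a c, f t := by
  rw [integral_indicator measurableSet_Ico, Measure.restrict_restrict measurableSet_Ico,
    Set.inter_eq_left.2 hsub]

lemma int_Ico_one {a c : ℝ} (h : a ≤ c) : ∫ t in Ico a c, (1:ℝ) = c - a := by
  simp [Real.volume_Ico, ENNReal.toReal_ofReal (sub_nonneg.2 h), h]

lemma int_Ico_id {a c : ℝ} (h : a ≤ c) : ∫ t in Ico a c, t = (c^2 - a^2)/2 := by
  rw [integral_Ico_eq_integral_Ioo, ← integral_Ioc_eq_integral_Ioo,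
    ← intervalIntegral.integral_of_le h, integral_id]

lemma haar_bounds (j m : ℕ) (hm : m < 2^j) :
    (0:ℝ) ≤ 2*m/2^(j+1) ∧ (2*m:ℝ)/2^(j+1) ≤ (2*m+1)/2^(j+1)
    ∧ ((2*m+1):ℝ)/2^(j+1) ≤ (2*m+2)/2^(j+1) ∧ ((2*m+2):ℝ)/2^(j+1) ≤ 1 := by
  have hp : (0:ℝ) < 2^(j+1) := by positivity
  have hle : ((2*m+2):ℝ) ≤ 2^(j+1) := by
    have : (2*m+2:ℕ) ≤ 2^(j+1) := by
      have : m + 1 ≤ 2^j := hm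
      calc 2*m+2 = 2*(m+1) := by ring
        _ ≤ 2*2^j := by omega
        _ = 2^(j+1) := (pow_succ' 2 j).symm
    exact_mod_cast this
  refine ⟨by positivity, ?_, ?_, ?_⟩
  · gcongr; linarith
  · gcongr; linarith
  · rw [div_le_one hp]; exact hle

lemma mul_ind (s : Set ℝ) (t : ℝ) :
    t * s.indicator (fun _ => (1:ℝ)) t = s.indicator (fun x => x) t := by
  by_cases h : t ∈ s <;> simp [h]

lemma ind_integrableOn {a c : ℝ} (f : ℝ → ℝ) (hf : Measurable f)
    (hb : ∀ t ∈ Ico (0:ℝ) 1, |f t| ≤ 1) :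
    IntegrableOn (fun t => (Ico a c).indicator f t) (Ico (0:ℝ) 1) := by
  refine intOn_bdd 1 (hf.indicator measurableSet_Ico) (fun t ht => ?_)
  by_cases h : t ∈ Ico a c <;> simp [Set.indicator_apply, h]
  · exact hb t ht

lemma haar_int_zero (j m : ℕ) (hm : m < 2^j) :
    ∫ t in Ico (0:ℝ) 1, haar j m t = 0 := by
  obtain ⟨h0, hac, hcb, hb1⟩ := haar_bounds j m hm
  rw [haar_eq]
  rw [integral_sub (ind_integrableOn _ measurable_const (by norm_num))
      (ind_integrableOn _ measurable_const (by norm_num))]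
  rw [ind_int _ (Ico_subset_Ico h0 (hcb.trans hb1)),
      ind_int _ (Ico_subset_Ico (h0.trans hac) hb1),
      int_Ico_one hac, int_Ico_one hcb]
  ring

lemma haar_int_id (j m : ℕ) (hm : m < 2^j) :
    ∫ t in Ico (0:ℝ) 1, t * haar j m t = -(1 / 2^(2*(j+1))) := by
  obtain ⟨h0, hac, hcb, hb1⟩ := haar_bounds j m hm
  rw [haar_eq]
  simp only [mul_sub, mul_ind]
  have hbd : ∀ t ∈ Ico (0:ℝ) 1, |(fun x : ℝ => x) t| ≤ 1 := by
    intro t ht; simp only [mem_Ico] at ht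
    rw [abs_of_nonneg ht.1]; linarith [ht.2]
  rw [integral_sub (ind_integrableOn (fun x => x) measurable_id hbd)
      (ind_integrableOn (fun x => x) measurable_id hbd)]
  rw [ind_int _ (Ico_subset_Ico h0 (hcb.trans hb1)),
      ind_int _ (Ico_subset_Ico (h0.trans hac) hb1),
      int_Ico_id hac, int_Ico_id hcb]
  have hp : (2:ℝ)^(j+1) ≠ 0 := by positivity
  have h2 : (2:ℝ)^(2*(j+1)) = (2^(j+1))^2 := by
    rw [mul_comm, pow_mul]
  rw [h2]
  field_simp
  ring

lemma ind_haar_int_zero (j m : ℕ) (hm : m < 2^j) (k : ℤ) (z : ℝ) (hz : z = k / 2^j) :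
    ∫ t in Ico (0:ℝ) 1, (if z < t then (1:ℝ) else 0) * haar j m t = 0 := by
  have hp : (0:ℝ) < 2^j := by positivity
  have hp1 : (0:ℝ) < 2^(j+1) := by positivity
  have ha : (2*m:ℝ)/2^(j+1) = (m:ℝ)/2^j := by
    rw [div_eq_div_iff hp1.ne' hp.ne']; rw [pow_succ]; ring
  have hb : (2*m+2:ℝ)/2^(j+1) = ((m:ℝ)+1)/2^j := by
    rw [div_eq_div_iff hp1.ne' hp.ne']; rw [pow_succ]; ring
  rcases le_or_gt (k:ℝ) m with hk | hk
  · -- z ≤ a : integrand equals haar a.e.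
    have hza : z ≤ (2*m:ℝ)/2^(j+1) := by
      rw [hz, ha]; gcongr
    have hae : ∀ᵐ t ∂(volume.restrict (Ico (0:ℝ) 1)), t ≠ z := by
      refine ae_iff.2 ?_
      have h1 : {t : ℝ | ¬ t ≠ z} = {z} := by ext; simp
      rw [h1, Measure.restrict_apply (measurableSet_singleton z)]
      exact measure_mono_null Set.inter_subset_left Real.volume_singleton
    rw [integral_congr_ae (hae.mono fun t ht => ?_), haar_int_zero j m hm]
    by_cases hlt : z < t
    · simp [hlt]
    · have htz : t < z := lt_of_le_of_ne (not_lt.1 hlt) ht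
      have hta : t < (2*m:ℝ)/2^(j+1) := lt_of_lt_of_le htz hza
      have h0 : haar j m t = 0 := by
        unfold haar
        have hac : (2*m:ℝ)/2^(j+1) ≤ (2*m+1:ℝ)/2^(j+1) := by gcongr; linarith
        split_ifs with hc1 hc2
        · linarith [hc1.1]
        · linarith [hc2.1]
        · rfl
      simp [hlt, h0]
  · -- b ≤ z : integrand is zero
    have hkm : (m:ℝ) + 1 ≤ k := by
      have : (m:ℤ) + 1 ≤ k := by exact_mod_cast hk
      exact_mod_cast this
    have hbz : (2*m+2:ℝ)/2^(j+1) ≤ z := by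
      rw [hz, hb]; gcongr
    have : ∀ t : ℝ, (if z < t then (1:ℝ) else 0) * haar j m t = 0 := by
      intro t
      by_cases hlt : z < t
      · have hbt : (2*m+2:ℝ)/2^(j+1) < t := lt_of_le_of_lt hbz hlt
        have h0 : haar j m t = 0 := by
          unfold haar
          have hcb : (2*m+1:ℝ)/2^(j+1) ≤ (2*m+2:ℝ)/2^(j+1) := by gcongr; linarith
          split_ifs with hc1 hc2
          · linarith [hc1.2]
          · linarith [hc2.2]
          · rfl
        simp [h0]
      · simp [hlt]
    simp only [this, integral_zero]


lemma hamX_dyadic (n : ℕ) (t : Fin n → Bool) : ∃ k : ℤ, hamX n t = (k:ℝ) / 2^n := by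
  refine ⟨∑ i : Fin n, (if t i then (2:ℤ)^i.val else 0), ?_⟩
  rw [hamX]
  push_cast
  rw [Finset.sum_div]
  refine Finset.sum_congr rfl fun i _ => ?_
  by_cases h : t i <;> simp only [h, if_true, if_false]
  · rw [div_eq_div_iff (by positivity) (by positivity), one_mul, ← pow_add]
    congr 1
    omega
  · simp

lemma hamY_dyadic (n : ℕ) (σ t : Fin n → Bool) : ∃ k : ℤ, hamY n σ t = (k:ℝ) / 2^n := by
  refine ⟨∑ i : Fin n, (if (t i).xor (σ i) then (2:ℤ)^(n - (i.val+1)) else 0), ?_⟩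
  rw [hamY]
  push_cast
  rw [Finset.sum_div]
  refine Finset.sum_congr rfl fun i _ => ?_
  by_cases h : (t i).xor (σ i) <;> simp only [h, if_true, if_false]
  · rw [div_eq_div_iff (by positivity) (by positivity), one_mul, ← pow_add]
    congr 1
    omega
  · simp

lemma dyadic_flip {z : ℝ} {n : ℕ} (h : ∃ k : ℤ, z = (k:ℝ) / 2^n) :
    ∃ k : ℤ, 1 - z = (k:ℝ) / 2^n := by
  obtain ⟨k, hk⟩ := h
  refine ⟨2^n - k, ?_⟩
  rw [hk]
  have : ((2:ℝ))^n ≠ 0 := by positivity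
  push_cast
  field_simp

lemma dyadic_up {z : ℝ} {n j : ℕ} (hn : n ≤ j) (h : ∃ k : ℤ, z = (k:ℝ) / 2^n) :
    ∃ k : ℤ, z = (k:ℝ) / 2^j := by
  obtain ⟨k, hk⟩ := h
  refine ⟨k * 2^(j-n), ?_⟩
  rw [hk]
  push_cast
  rw [div_eq_div_iff (by positivity) (by positivity), mul_assoc, ← pow_add]
  congr 2
  omega

lemma ind_measurable (z : ℝ) : Measurable (fun t : ℝ => if z < t then (1:ℝ) else 0) :=
  Measurable.ite measurableSet_Ioi measurable_const measurable_const

lemma indmul_intOn (j m : ℕ) (z : ℝ) :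
    IntegrableOn (fun t => (if z < t then (1:ℝ) else 0) * haar j m t) (Ico (0:ℝ) 1) := by
  refine intOn_bdd 1 ((ind_measurable z).mul (haar_measurable j m)) fun t _ => ?_
  rw [abs_mul]
  have h1 : |(if z < t then (1:ℝ) else 0)| ≤ 1 := by split_ifs <;> norm_num
  exact mul_le_one₀ h1 (abs_nonneg _) (haar_abs_le j m t)

lemma idmul_intOn (j m : ℕ) :
    IntegrableOn (fun t => t * haar j m t) (Ico (0:ℝ) 1) := by
  refine intOn_bdd 1 (measurable_id.mul (haar_measurable j m)) fun t ht => ?_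
  rw [abs_mul]
  simp only [mem_Ico] at ht
  have h1 : |t| ≤ 1 := by rw [abs_of_nonneg ht.1]; linarith [ht.2]
  exact mul_le_one₀ h1 (abs_nonneg _) (haar_abs_le j m t)


/-- Proposition (iii): for the local discrepancy `D` of the symmetrized Hammersley type
multiset `R̃_n`, if `j₁ ≥ n` or `j₂ ≥ n` then `|μ_{(j₁,j₂),(m₁,m₂)}(D)| = 2^{-2(j₁+j₂+2)}`. -/
theorem disc_haar_coeff_large (n : ℕ) (σ : Fin n → Bool) (j1 j2 m1 m2 : ℕ)
    (hj : n ≤ j1 ∨ n ≤ j2) (h1 : m1 < 2 ^ j1) (h2 : m2 < 2 ^ j2) :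
    |∫ t1 in Set.Ico (0 : ℝ) 1, ∫ t2 in Set.Ico (0 : ℝ) 1,
      discSym n σ t1 t2 * haar j1 m1 t1 * haar j2 m2 t2| = 1 / 2 ^ (2 * (j1 + j2 + 2)) := by
  set G2 : (Fin n → Bool) × Bool × Bool → ℝ := fun z =>
    ∫ t2 in Ico (0:ℝ) 1, (if (symPoint n σ z).2 < t2 then (1:ℝ) else 0) * haar j2 m2 t2 with hG2
  -- inner integral
  have inner : ∀ t1 : ℝ, (∫ t2 in Ico (0:ℝ) 1,
      discSym n σ t1 t2 * haar j1 m1 t1 * haar j2 m2 t2)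
      = (haar j1 m1 t1 / 2^(n+2)) * (∑ z : (Fin n → Bool) × Bool × Bool,
          (if (symPoint n σ z).1 < t1 then (1:ℝ) else 0) * G2 z)
        - (t1 * haar j1 m1 t1) * (-(1/2^(2*(j2+1)))) := by
    intro t1
    have hre : ∀ t2 : ℝ, discSym n σ t1 t2 * haar j1 m1 t1 * haar j2 m2 t2
        = (haar j1 m1 t1 / 2^(n+2)) * (∑ z : (Fin n → Bool) × Bool × Bool,
            (if (symPoint n σ z).1 < t1 then (1:ℝ) else 0) *
              ((if (symPoint n σ z).2 < t2 then (1:ℝ) else 0) * haar j2 m2 t2))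
          - (t1 * haar j1 m1 t1) * (t2 * haar j2 m2 t2) := by
      intro t2
      have hS : (∑ z : (Fin n → Bool) × Bool × Bool,
            (if (symPoint n σ z).1 < t1 then (1:ℝ) else 0) *
              ((if (symPoint n σ z).2 < t2 then (1:ℝ) else 0) * haar j2 m2 t2))
          = (∑ z : (Fin n → Bool) × Bool × Bool,
              if (symPoint n σ z).1 < t1 ∧ (symPoint n σ z).2 < t2 then (1:ℝ) else 0)
            * haar j2 m2 t2 := by
        rw [Finset.sum_mul]
        refine Finset.sum_congr rfl fun z _ => ?_
        by_cases hp : (symPoint n σ z).1 < t1 <;>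
          by_cases hq : (symPoint n σ z).2 < t2 <;> simp [hp, hq]
      rw [hS, discSym]; ring
    simp only [hre]
    rw [integral_sub (Integrable.const_mul (integrable_finset_sum _ fun z _ =>
          Integrable.const_mul (indmul_intOn j2 m2 (symPoint n σ z).2) _) _)
        (Integrable.const_mul (idmul_intOn j2 m2) _)]
    rw [integral_const_mul, integral_const_mul,
      integral_finset_sum _ fun z _ =>
        Integrable.const_mul (indmul_intOn j2 m2 (symPoint n σ z).2) _,
      haar_int_id j2 m2 h2]
    congr 2
    exact Finset.sum_congr rfl fun z _ => integral_const_mul _ _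
  simp only [inner]
  -- outer integrand rearrangement
  have hout : ∀ t1 : ℝ,
      (haar j1 m1 t1 / 2^(n+2)) * (∑ z : (Fin n → Bool) × Bool × Bool,
          (if (symPoint n σ z).1 < t1 then (1:ℝ) else 0) * G2 z)
        - (t1 * haar j1 m1 t1) * (-(1/2^(2*(j2+1))))
      = ((1:ℝ)/2^(n+2)) * (∑ z : (Fin n → Bool) × Bool × Bool,
          G2 z * ((if (symPoint n σ z).1 < t1 then (1:ℝ) else 0) * haar j1 m1 t1))
        - (-(1/2^(2*(j2+1)))) * (t1 * haar j1 m1 t1) := by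
    intro t1
    rw [Finset.mul_sum, Finset.mul_sum]
    congr 1
    · exact Finset.sum_congr rfl fun z _ => by ring
    · ring
  simp only [hout]
  rw [integral_sub (Integrable.const_mul (integrable_finset_sum _ fun z _ =>
        Integrable.const_mul (indmul_intOn j1 m1 (symPoint n σ z).1) _) _)
      (Integrable.const_mul (idmul_intOn j1 m1) _)]
  rw [integral_const_mul, integral_const_mul,
    integral_finset_sum _ fun z _ =>
      Integrable.const_mul (indmul_intOn j1 m1 (symPoint n σ z).1) _,
    haar_int_id j1 m1 h1]
  have hsum : (∑ z : (Fin n → Bool) × Bool × Bool,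
      ∫ t1 in Ico (0:ℝ) 1, G2 z * ((if (symPoint n σ z).1 < t1 then (1:ℝ) else 0)
        * haar j1 m1 t1)) = 0 := by
    refine Finset.sum_eq_zero fun z _ => ?_
    rw [integral_const_mul]
    rcases hj with hn | hn
    · -- first coordinate is dyadic with denominator 2^j1
      have hd : ∃ k : ℤ, (symPoint n σ z).1 = (k:ℝ) / 2^j1 := by
        refine dyadic_up hn ?_
        rcases z with ⟨t, b1, b2⟩
        simp only [symPoint]
        by_cases hb : b1 <;> simp only [hb, if_true, if_false]
        · exact dyadic_flip (hamX_dyadic n t)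
        · exact hamX_dyadic n t
      obtain ⟨k, hk⟩ := hd
      rw [ind_haar_int_zero j1 m1 h1 k _ hk, mul_zero]
    · -- G2 z = 0
      have hd : ∃ k : ℤ, (symPoint n σ z).2 = (k:ℝ) / 2^j2 := by
        refine dyadic_up hn ?_
        rcases z with ⟨t, b1, b2⟩
        simp only [symPoint]
        by_cases hb : b2 <;> simp only [hb, if_true, if_false]
        · exact dyadic_flip (hamY_dyadic n σ t)
        · exact hamY_dyadic n σ t
      obtain ⟨k, hk⟩ := hd
      rw [hG2]
      simp only
      rw [ind_haar_int_zero j2 m2 h2 k _ hk, zero_mul]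
  rw [hsum, mul_zero, zero_sub, abs_neg, neg_mul_neg, div_mul_div_comm, one_mul, ← pow_add,
    abs_of_nonneg (by positivity)]
  congr 1
  ring
end

section
/- Let n ∈ ℕ, let \tilde{R}_n be a symmetrized Hammersley type point set with N = 2^{n+2} points (for an arbitrary fixed choice function σ), and let D be its local discrepancy function. Then the integral of D over the unit square vanishes: ∫_0^1 ∫_0^1 D(t1,t2) dt1 dt2 = 0. -/
open MeasureTheory Set

lemma if_and_mul (P Q : Prop) [Decidable P] [Decidable Q] :
    (if P ∧ Q then (1:ℝ) else 0) = (if P then (1:ℝ) else 0) * (if Q then (1:ℝ) else 0) := by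
  by_cases hP : P <;> by_cases hQ : Q <;> simp [hP, hQ]

lemma ind_integrable_s16 (a : ℝ) :
    MeasureTheory.IntegrableOn (fun t : ℝ => if a < t then (1:ℝ) else 0) (Set.Ico 0 1) := by
  have h : (fun t : ℝ => if a < t then (1:ℝ) else 0)
      = Set.indicator (Set.Ioi a) (fun _ => (1:ℝ)) := by
    funext t; by_cases h : a < t <;> simp [Set.indicator, h]
  rw [h, MeasureTheory.IntegrableOn, MeasureTheory.integrable_indicator_iff measurableSet_Ioi]
  refine MeasureTheory.integrableOn_const (ne_of_lt ?_) (by simp)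
  rw [MeasureTheory.Measure.restrict_apply measurableSet_Ioi]
  calc MeasureTheory.volume (Set.Ioi a ∩ Set.Ico 0 1)
      ≤ MeasureTheory.volume (Set.Ico (0:ℝ) 1) := measure_mono Set.inter_subset_right
    _ < ⊤ := by simp [Real.volume_Ico]

lemma ind_integral (a : ℝ) (h0 : 0 ≤ a) (h1 : a ≤ 1) :
    (∫ t in Set.Ico (0:ℝ) 1, (if a < t then (1:ℝ) else 0)) = 1 - a := by
  have h : (fun t : ℝ => if a < t then (1:ℝ) else 0)
      = Set.indicator (Set.Ioi a) (fun _ => (1:ℝ)) := by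
    funext t; by_cases h : a < t <;> simp [Set.indicator, h]
  rw [h, MeasureTheory.setIntegral_indicator measurableSet_Ioi]
  have h2 : Set.Ico (0:ℝ) 1 ∩ Set.Ioi a = Set.Ioo a 1 := by
    ext t
    constructor
    · rintro ⟨⟨_, ht1⟩, ht2⟩; exact ⟨ht2, ht1⟩
    · rintro ⟨ht2, ht1⟩; exact ⟨⟨le_trans h0 ht2.le, ht1⟩, ht2⟩
  rw [h2]
  simp [Real.volume_Ioo, ENNReal.toReal_ofReal (by linarith : (0:ℝ) ≤ 1 - a), h1]

lemma id_integrableOn : MeasureTheory.IntegrableOn (fun t : ℝ => t) (Set.Ico 0 1) :=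
  (continuous_id.integrableOn_Icc (a := (0:ℝ)) (b := 1)).mono_set Set.Ico_subset_Icc_self

lemma id_integral : (∫ t in Set.Ico (0:ℝ) 1, t) = 1/2 := by
  rw [MeasureTheory.restrict_Ico_eq_restrict_Ioc,
    ← intervalIntegral.integral_of_le zero_le_one, integral_id]
  norm_num

lemma hamX_nonneg (n : ℕ) (t : Fin n → Bool) : 0 ≤ hamX n t := by
  apply Finset.sum_nonneg
  intro i _
  positivity

lemma hamX_le_one (n : ℕ) (t : Fin n → Bool) : hamX n t ≤ 1 := by
  have h1 : hamX n t ≤ ∑ i : Fin n, (1:ℝ) / 2 ^ (n - i.val) := by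
    apply Finset.sum_le_sum
    intro i _
    apply div_le_div_of_nonneg_right ?_ (by positivity)
    · split <;> norm_num
  refine h1.trans ?_
  rw [Fin.sum_univ_eq_sum_range (fun k => (1:ℝ) / 2 ^ (n - k))]
  rw [← Finset.sum_range_reflect]
  have h2 : ∀ j ∈ Finset.range n, (1:ℝ) / 2 ^ (n - (n - 1 - j)) = (1/2) * (1/2)^j := by
    intro j hj
    rw [Finset.mem_range] at hj
    have : n - (n - 1 - j) = j + 1 := by omega
    rw [this, div_pow, one_pow, pow_succ]
    ring
  rw [Finset.sum_congr rfl h2, ← Finset.mul_sum]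
  have := sum_geometric_two_le n
  linarith

lemma hamY_nonneg (n : ℕ) (σ t : Fin n → Bool) : 0 ≤ hamY n σ t := by
  apply Finset.sum_nonneg
  intro i _
  positivity

lemma hamY_le_one (n : ℕ) (σ t : Fin n → Bool) : hamY n σ t ≤ 1 := by
  have h1 : hamY n σ t ≤ ∑ i : Fin n, (1:ℝ) / 2 ^ (i.val + 1) := by
    apply Finset.sum_le_sum
    intro i _
    apply div_le_div_of_nonneg_right ?_ (by positivity)
    · split <;> norm_num
  refine h1.trans ?_
  rw [Fin.sum_univ_eq_sum_range (fun k => (1:ℝ) / 2 ^ (k + 1))]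
  have h2 : ∀ j ∈ Finset.range n, (1:ℝ) / 2 ^ (j + 1) = (1/2) * (1/2)^j := by
    intro j _
    rw [pow_succ]
    field_simp
    rw [← mul_pow]; norm_num
  rw [Finset.sum_congr rfl h2, ← Finset.mul_sum]
  have := sum_geometric_two_le n
  linarith

lemma symPoint_mem (n : ℕ) (σ : Fin n → Bool) (z : (Fin n → Bool) × Bool × Bool) :
    (0 ≤ (symPoint n σ z).1 ∧ (symPoint n σ z).1 ≤ 1) ∧
    (0 ≤ (symPoint n σ z).2 ∧ (symPoint n σ z).2 ≤ 1) := by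
  have hx0 := hamX_nonneg n z.1
  have hx1 := hamX_le_one n z.1
  have hy0 := hamY_nonneg n σ z.1
  have hy1 := hamY_le_one n σ z.1
  unfold symPoint
  constructor <;> constructor <;> dsimp only <;> split <;> linarith

lemma sum_key (n : ℕ) (σ : Fin n → Bool) :
    ∑ z : (Fin n → Bool) × Bool × Bool,
      (1 - (symPoint n σ z).1) * (1 - (symPoint n σ z).2) = 2 ^ n := by
  rw [Fintype.sum_prod_type]
  have h : ∀ t : Fin n → Bool, (∑ p : Bool × Bool,
      (1 - (symPoint n σ (t, p)).1) * (1 - (symPoint n σ (t, p)).2)) = 1 := by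
    intro t
    rw [Fintype.sum_prod_type]
    simp [Fintype.sum_bool, symPoint]
    ring
  rw [Finset.sum_congr rfl (fun t _ => h t)]
  simp [Finset.card_univ]

/-- Proposition (vi): the integral of the local discrepancy of the symmetrized Hammersley
type multiset `R̃_n` over the unit square vanishes. -/
theorem disc_integral_zero (n : ℕ) (σ : Fin n → Bool) :
    (∫ t1 in Set.Ico (0 : ℝ) 1, ∫ t2 in Set.Ico (0 : ℝ) 1, discSym n σ t1 t2) = 0 := by
  have hinner : ∀ t1 : ℝ, (∫ t2 in Set.Ico (0:ℝ) 1, discSym n σ t1 t2)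
      = (∑ z : (Fin n → Bool) × Bool × Bool,
          (if (symPoint n σ z).1 < t1 then (1:ℝ) else 0) * (1 - (symPoint n σ z).2))
          / 2 ^ (n + 2) - t1 / 2 := by
    intro t1
    unfold discSym
    simp_rw [if_and_mul, div_eq_mul_inv]
    rw [MeasureTheory.integral_sub]
    · congr 1
      · rw [MeasureTheory.integral_mul_const, MeasureTheory.integral_finset_sum]
        · congr 1
          apply Finset.sum_congr rfl
          intro z _
          rw [MeasureTheory.integral_const_mul,
            ind_integral _ (symPoint_mem n σ z).2.1 (symPoint_mem n σ z).2.2]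
        · intro z _
          exact (ind_integrable_s16 _).const_mul _
      · rw [MeasureTheory.integral_const_mul, id_integral]
        norm_num
    · exact ((MeasureTheory.integrable_finset_sum _ (fun z _ =>
        (ind_integrable_s16 _).const_mul _)).mul_const _)
    · exact id_integrableOn.const_mul t1
    
  have houter : ∀ t1 : ℝ, (∫ t2 in Set.Ico (0:ℝ) 1, discSym n σ t1 t2)
      = (∑ z : (Fin n → Bool) × Bool × Bool,
          (if (symPoint n σ z).1 < t1 then (1:ℝ) else 0) * (1 - (symPoint n σ z).2))
          * ((2:ℝ) ^ (n + 2))⁻¹ - t1 * (1/2) := by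
    intro t1
    rw [hinner t1, div_eq_mul_inv]
    ring
  simp_rw [houter]
  rw [MeasureTheory.integral_sub]
  · rw [MeasureTheory.integral_mul_const, MeasureTheory.integral_finset_sum]
    · have hsum : ∀ z : (Fin n → Bool) × Bool × Bool,
        (∫ t1 in Set.Ico (0:ℝ) 1,
          (if (symPoint n σ z).1 < t1 then (1:ℝ) else 0) * (1 - (symPoint n σ z).2))
        = (1 - (symPoint n σ z).1) * (1 - (symPoint n σ z).2) := by
        intro z
        rw [MeasureTheory.integral_mul_const,
          ind_integral _ (symPoint_mem n σ z).1.1 (symPoint_mem n σ z).1.2]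
      rw [Finset.sum_congr rfl (fun z _ => hsum z), sum_key]
      rw [MeasureTheory.integral_mul_const, id_integral]
      rw [pow_add]
      have h2 : (2:ℝ) ^ n ≠ 0 := by positivity
      field_simp
      ring
    · intro z _
      exact (ind_integrable_s16 _).mul_const _
  · exact ((MeasureTheory.integrable_finset_sum _ (fun z _ =>
      (ind_integrable_s16 _).mul_const _)).mul_const _)
  · exact id_integrableOn.mul_const _
end
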